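/- arXiv:2005.09424 — 5 statements merged into one kernel-verified Lean document; each statement's English description precedes it below -/
import Mathlib

section
/- Let Φ be a C^2 function on ℝ that is strictly increasing, odd, satisfies x·Φ''(x) < 0 for x ≠ 0. Then for all b ∈ ℝ and σ > 0: b · E_{b,σ}[Φ(η) Φ'(η)] ≥ 0, where η ~ N(b,σ). -/
open MeasureTheory ProbabilityTheory Real

/-- Gaussian expectation with mean `b` and variance `σ`. -/
noncomputable def gE (b σ : ℝ) (f : ℝ → ℝ) : ℝ :=
  ∫ x, f x ∂(gaussianReal b σ.toNNReal)

/-- for `Φ` C², strictly increasing, odd, with `x Φ''(x) < 0` for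
`x ≠ 0`, one has `b · E_{b,σ}[Φ(η)Φ'(η)] ≥ 0` for all `b ∈ ℝ`, `σ > 0`. -/
theorem bias_term_nonneg
    (Φ : ℝ → ℝ) (hC2 : ContDiff ℝ 2 Φ) (hmono : StrictMono Φ)
    (hodd : ∀ x, Φ (-x) = -Φ x)
    (hconc : ∀ x ≠ 0, x * deriv (deriv Φ) x < 0) :
    ∀ (b σ : ℝ), 0 < σ →
      0 ≤ b * gE b σ (fun x => Φ x * deriv Φ x) := by
  intro b σ hσ
  -- basic regularity facts
  have h2 : ContDiff ℝ ((1:ℕ) + 1) Φ := by norm_num; exact_mod_cast hC2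
  rw [contDiff_succ_iff_deriv] at h2
  have hdiff : Differentiable ℝ Φ := h2.1
  have hC1d : ContDiff ℝ 1 (deriv Φ) := by exact_mod_cast h2.2.2
  have hdcont : Continuous (deriv Φ) := hC1d.continuous
  have hddiff : Differentiable ℝ (deriv Φ) := hC1d.differentiable one_ne_zero
  have hΦ0 : Φ 0 = 0 := by have := hodd 0; simp at this; linarith
  -- the derivative is nonnegative
  have hd0 : ∀ x, 0 ≤ deriv Φ x := by
    intro x
    have h := (hdiff x).hasDerivAt
    rw [hasDerivAt_iff_tendsto_slope] at h
    have h' : Filter.Tendsto (slope Φ x) (nhdsWithin x (Set.Ioi x)) (nhds (deriv Φ x)) :=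
      h.mono_left (nhdsWithin_mono x fun y hy => ne_of_gt hy)
    refine ge_of_tendsto h' ?_
    filter_upwards [self_mem_nhdsWithin] with y hy
    have hxy : x < y := hy
    rw [slope_def_field]
    exact div_nonneg (sub_nonneg.2 (hmono hxy).le) (sub_nonneg.2 hxy.le)
  -- the derivative is even
  have hev : ∀ x, deriv Φ (-x) = deriv Φ x := by
    intro x
    have h1 : (fun y => Φ (-y)) = fun y => -Φ y := funext hodd
    have h2' := congrArg (fun f : ℝ → ℝ => deriv f x) h1
    simp only [deriv_comp_neg] at h2'
    rw [deriv.fun_neg] at h2'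
    linarith
  -- the derivative is bounded by its value at 0
  set L : ℝ := deriv Φ 0 with hLdef
  have hanti : StrictAntiOn (deriv Φ) (Set.Ici 0) := by
    refine strictAntiOn_of_deriv_neg (convex_Ici 0) hdcont.continuousOn ?_
    intro x hx
    rw [interior_Ici] at hx
    have hx0 : (0:ℝ) < x := hx
    have := hconc x (ne_of_gt hx0)
    nlinarith
  have hL : ∀ x, deriv Φ x ≤ L := by
    have key : ∀ x, 0 ≤ x → deriv Φ x ≤ L := by
      intro x hx
      rcases eq_or_lt_of_le hx with h | h
      · rw [← h]
      · exact (hanti Set.self_mem_Ici hx h).le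
    intro x
    rcases le_total 0 x with h | h
    · exact key x h
    · rw [← hev x]; exact key (-x) (by linarith)
  have hLnonneg : 0 ≤ L := hd0 0
  have hLabs : ∀ x, |deriv Φ x| ≤ L := fun x => by
    rw [abs_of_nonneg (hd0 x)]; exact hL x
  -- Φ is L-Lipschitz (through 0)
  have hΦabs : ∀ x, |Φ x| ≤ L * |x| := by
    intro x
    have := Convex.norm_image_sub_le_of_norm_deriv_le (𝕜 := ℝ) (f := Φ) (s := Set.univ)
      (fun y _ => hdiff y) (fun y _ => by simpa [Real.norm_eq_abs] using hLabs y)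
      convex_univ (Set.mem_univ 0) (Set.mem_univ x)
    simpa [hΦ0, Real.norm_eq_abs] using this
  -- sign of Φ
  have hsign_pos : ∀ x, 0 ≤ x → 0 ≤ Φ x := by
    intro x hx
    rcases eq_or_lt_of_le hx with h | h
    · rw [← h, hΦ0]
    · exact (hΦ0 ▸ hmono h).le
  have hsign_neg : ∀ x, x ≤ 0 → Φ x ≤ 0 := by
    intro x hx
    rcases eq_or_lt_of_le hx with h | h
    · rw [h, hΦ0]
    · exact (hΦ0 ▸ hmono h).le
  -- variance facts
  set v : NNReal := σ.toNNReal with hvdef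
  have hv0 : v ≠ 0 := by
    simp only [hvdef, ne_eq, Real.toNNReal_eq_zero, not_le]
    exact hσ
  have hvpos : (0:ℝ) < (v:ℝ) := by
    rw [hvdef, Real.coe_toNNReal _ hσ.le]; exact hσ
  set φf : ℝ → ℝ := gaussianPDFReal b v with hφdef
  set c : ℝ := (Real.sqrt (2 * π * v))⁻¹ with hcdef
  have hc0 : 0 ≤ c := by positivity
  have hφeq : ∀ x, φf x = c * Real.exp (-(x - b) ^ 2 / (2 * v)) := fun x => rfl
  have hφnonneg : ∀ x, 0 ≤ φf x := fun x => gaussianPDFReal_nonneg b v x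
  -- the pointwise sign fact for the pdf difference
  have hpdf : ∀ x, 0 ≤ b * x → φf (-x) ≤ φf x := by
    intro x hbx
    rw [hφeq, hφeq]
    refine mul_le_mul_of_nonneg_left (Real.exp_le_exp.mpr ?_) hc0
    apply div_le_div_of_nonneg_right ?_ (by positivity)
    nlinarith
  -- the integrand
  set g : ℝ → ℝ := fun x => Φ x * deriv Φ x with hgdef
  have hgodd : ∀ x, g (-x) = -g x := by
    intro x
    simp only [hgdef, hodd x, hev x]
    ring
  set h : ℝ → ℝ := fun x => φf x * g x with hhdef
  -- integrability
  set a : ℝ := (2 * (v:ℝ))⁻¹ with hadef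
  have ha : 0 < a := by positivity
  have h1int : Integrable (fun y : ℝ => |y| * Real.exp (-a * y ^ 2)) := by
    have h0 : Integrable (fun y : ℝ => y * Real.exp (-a * y ^ 2)) := by
      have := integrable_rpow_mul_exp_neg_mul_sq ha (by norm_num : (-1:ℝ) < 1)
      simpa using this
    have := h0.abs
    refine this.congr ?_
    filter_upwards with y
    rw [abs_mul, abs_of_pos (Real.exp_pos _)]
  have h2int : Integrable (fun y : ℝ => |b| * Real.exp (-a * y ^ 2)) :=
    (integrable_exp_neg_mul_sq ha).const_mul |b|
  set F : ℝ → ℝ := fun y => (|y| + |b|) * Real.exp (-a * y ^ 2) with hFdef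
  have hF : Integrable F := by
    have := h1int.add h2int
    simpa [hFdef, add_mul, Pi.add_def] using this
  have hFb : Integrable (fun x => F (x - b)) := hF.comp_sub_right b
  have hbound : ∀ x, ‖h x‖ ≤ (c * L * L) * F (x - b) := by
    intro x
    have e1 : φf x = c * Real.exp (-a * (x - b) ^ 2) := by
      rw [hφeq]; congr 1; rw [hadef]; field_simp
    have e2 : |g x| ≤ L * L * (|x - b| + |b|) := by
      have hgx : |g x| ≤ (L * |x|) * L := by
        rw [hgdef]
        calc |Φ x * deriv Φ x| = |Φ x| * |deriv Φ x| := abs_mul _ _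
        _ ≤ (L * |x|) * L := by
            apply mul_le_mul (hΦabs x) (hLabs x) (abs_nonneg _)
            positivity
      have hx : |x| ≤ |x - b| + |b| := by
        calc |x| = |(x - b) + b| := by ring_nf
        _ ≤ |x - b| + |b| := abs_add_le _ _
      calc |g x| ≤ (L * |x|) * L := hgx
      _ ≤ L * L * (|x - b| + |b|) := by nlinarith [abs_nonneg x]
    rw [Real.norm_eq_abs, hhdef]
    calc |φf x * g x| = φf x * |g x| := by
          rw [abs_mul, abs_of_nonneg (hφnonneg x)]
    _ ≤ (c * Real.exp (-a * (x - b) ^ 2)) * (L * L * (|x - b| + |b|)) := by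
          rw [← e1]
          exact mul_le_mul_of_nonneg_left e2 (hφnonneg x)
    _ = (c * L * L) * F (x - b) := by rw [hFdef]; ring
  have hcont : Continuous h := by
    apply Continuous.mul
    · rw [hφdef, gaussianPDFReal_def]
      fun_prop
    · exact (hdiff.continuous).mul hdcont
  have hint : Integrable h :=
    Integrable.mono' (hFb.const_mul (c * L * L)) hcont.aestronglyMeasurable
      (Filter.Eventually.of_forall hbound)
  have hint_neg : Integrable (fun x => h (-x)) := hint.comp_neg
  -- pointwise nonnegativity of the symmetrized integrand
  have hpt : ∀ x, 0 ≤ b * h x + b * h (-x) := by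
    intro x
    have key : b * h x + b * h (-x) = (b * Φ x) * deriv Φ x * (φf x - φf (-x)) := by
      simp only [hhdef, hgdef, hodd x, hev x]
      ring
    rw [key]
    rcases le_total 0 (b * x) with hbx | hbx
    · have h1 : 0 ≤ b * Φ x := by
        rcases le_total 0 x with hx | hx
        · rcases eq_or_lt_of_le hx with h | h
          · rw [← h, hΦ0]; ring_nf; exact le_rfl
          · have hb : 0 ≤ b := by nlinarith
            exact mul_nonneg hb (hsign_pos x hx)
        · rcases eq_or_lt_of_le hx with h | h
          · rw [h, hΦ0]; ring_nf; exact le_rfl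
          · have hb : b ≤ 0 := by nlinarith
            exact mul_nonneg_iff.mpr (Or.inr ⟨hb, hsign_neg x hx⟩)
      have h2 : 0 ≤ φf x - φf (-x) := sub_nonneg.2 (hpdf x hbx)
      exact mul_nonneg (mul_nonneg h1 (hd0 x)) h2
    · have h1 : b * Φ x ≤ 0 := by
        rcases le_total 0 x with hx | hx
        · rcases eq_or_lt_of_le hx with h | h
          · rw [← h, hΦ0]; ring_nf; exact le_rfl
          · have hb : b ≤ 0 := by nlinarith
            exact mul_nonpos_of_nonpos_of_nonneg hb (hsign_pos x hx)
        · rcases eq_or_lt_of_le hx with h | h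
          · rw [h, hΦ0]; ring_nf; exact le_rfl
          · have hb : 0 ≤ b := by nlinarith
            exact mul_nonpos_of_nonneg_of_nonpos hb (hsign_neg x hx)
      have h2 : φf x - φf (-x) ≤ 0 := by
        have := hpdf (-x) (by nlinarith)
        simp only [neg_neg] at this
        linarith
      exact mul_nonneg_iff.mpr (Or.inr ⟨mul_nonpos_of_nonpos_of_nonneg h1 (hd0 x), h2⟩)
  -- rewrite the Gaussian expectation as a Lebesgue integral
  have hgE : gE b σ g = ∫ x, h x := by
    rw [gE, ← hvdef, gaussianReal_of_var_ne_zero b hv0]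
    have hpdfeq : gaussianPDF b v = fun x => ((Real.toNNReal (φf x) : NNReal) : ENNReal) := rfl
    rw [hpdfeq, integral_withDensity_eq_integral_smul
      ((measurable_gaussianPDFReal b v).real_toNNReal) g]
    congr 1
    funext x
    rw [NNReal.smul_def, smul_eq_mul, Real.coe_toNNReal _ (hφnonneg x)]
  -- conclude
  have hsymm : ∫ x, h x = ∫ x, h (-x) := (integral_neg_eq_self h volume).symm
  have hadd : 0 ≤ ∫ x, (b * h x + b * h (-x)) := integral_nonneg hpt
  rw [integral_add ((hint.const_mul b)) ((hint_neg.const_mul b)),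
    integral_const_mul, integral_const_mul, ← hsymm] at hadd
  rw [hgE]
  linarith
end

section
/- Let Φ: ℝ → ℝ be C^2, strictly increasing, odd, with x·Φ''(x) < 0 for x ≠ 0 and E_{0,1}[|Φ|] bounded. Then for every b ∈ ℝ and σ > 0: E_{b,σ}[Φ(η)²] > E_{b,σ}[η Φ(η) Φ'(η)], where η ~ N(b,σ). -/
open MeasureTheory ProbabilityTheory Real

lemma pointwise_key (Φ : ℝ → ℝ) (hC2 : ContDiff ℝ 2 Φ) (hmono : StrictMono Φ)
    (hodd : ∀ x, Φ (-x) = -Φ x)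
    (hconc : ∀ x ≠ 0, x * deriv (deriv Φ) x < 0) :
    ∀ x ≠ 0, x * Φ x * deriv Φ x < Φ x ^ 2 := by
  have hΦ0 : Φ 0 = 0 := by have := hodd 0; simp at this; linarith
  have hdiff : Differentiable ℝ Φ := hC2.differentiable (by norm_num)
  have hC1' : ContDiff ℝ 1 (deriv Φ) :=
    (contDiff_succ_iff_deriv.mp (show ContDiff ℝ ((1:ℕ)+1) Φ by exact_mod_cast hC2)).2.2
  have hdiff' : Differentiable ℝ (deriv Φ) := hC1'.differentiable (by norm_num)
  -- deriv Φ is even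
  have heven : ∀ x, deriv Φ (-x) = deriv Φ x := by
    intro x
    have h1 : deriv (fun y => Φ (-y)) x = -deriv Φ (-x) := deriv_comp_neg Φ x
    have h2 : (fun y => Φ (-y)) = fun y => -Φ y := funext hodd
    rw [h2, deriv.fun_neg] at h1
    linarith
  -- h x = Φ x - x * deriv Φ x is strictly increasing on [0, ∞)
  set h : ℝ → ℝ := fun x => Φ x - x * deriv Φ x with hh
  have hderivh : ∀ x, HasDerivAt h (-(x * deriv (deriv Φ) x)) x := by
    intro x
    have h1 : HasDerivAt Φ (deriv Φ x) x := (hdiff x).hasDerivAt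
    have h2 : HasDerivAt (fun y : ℝ => y * deriv Φ y)
        (1 * deriv Φ x + x * deriv (deriv Φ) x) x :=
      (hasDerivAt_id x).mul (hdiff' x).hasDerivAt
    have := h1.sub h2
    exact this.congr_deriv (by ring)
  have hmonoh : StrictMonoOn h (Set.Ici 0) := by
    apply strictMonoOn_of_deriv_pos (convex_Ici 0)
    · exact (Continuous.sub hdiff.continuous (continuous_id.mul hdiff'.continuous)).continuousOn
    · intro x hx
      rw [interior_Ici] at hx
      rw [(hderivh x).deriv]
      have := hconc x (ne_of_gt hx)
      linarith
  have hpos : ∀ x > 0, 0 < h x := by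
    intro x hx
    have := hmonoh (Set.self_mem_Ici) (Set.mem_Ici.2 hx.le) hx
    simpa [hh, hΦ0] using this
  have key : ∀ x > 0, x * Φ x * deriv Φ x < Φ x ^ 2 := by
    intro x hx
    have hΦx : 0 < Φ x := by have := hmono hx; rwa [hΦ0] at this
    have h1 : x * deriv Φ x < Φ x := by have := hpos x hx; simp only [hh] at this; linarith
    calc x * Φ x * deriv Φ x = Φ x * (x * deriv Φ x) := by ring
      _ < Φ x * Φ x := by exact mul_lt_mul_of_pos_left h1 hΦx
      _ = Φ x ^ 2 := by ring
  intro x hx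
  rcases lt_trichotomy x 0 with hneg | h0 | hposx
  · have hy : 0 < -x := by linarith
    have := key (-x) hy
    rw [hodd x, heven] at this
    calc x * Φ x * deriv Φ x = (-x) * (-Φ x) * deriv Φ x := by ring
      _ < (-Φ x) ^ 2 := this
      _ = Φ x ^ 2 := by ring
  · exact absurd h0 hx
  · exact key x hposx

/-- for `Φ` C², strictly increasing, odd, with `x Φ''(x) < 0` for
`x ≠ 0` and Gaussian-integrable, `E_{b,σ}[Φ(η)²] > E_{b,σ}[η Φ(η) Φ'(η)]`. -/
theorem second_moment_dominates
    (Φ : ℝ → ℝ) (hC2 : ContDiff ℝ 2 Φ) (hmono : StrictMono Φ)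
    (hodd : ∀ x, Φ (-x) = -Φ x)
    (hconc : ∀ x ≠ 0, x * deriv (deriv Φ) x < 0)
    (hint : Integrable (fun x => |Φ x|) (gaussianReal 0 1))
    (b σ : ℝ) (hσ : 0 < σ)
    (hint1 : Integrable (fun x => Φ x ^ 2) (gaussianReal b σ.toNNReal))
    (hint2 : Integrable (fun x => x * Φ x * deriv Φ x) (gaussianReal b σ.toNNReal)) :
    gE b σ (fun x => x * Φ x * deriv Φ x) < gE b σ (fun x => Φ x ^ 2) := by
  have hkey := pointwise_key Φ hC2 hmono hodd hconc
  have hv : σ.toNNReal ≠ 0 := ne_of_gt (Real.toNNReal_pos.mpr hσ)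
  set μ := gaussianReal b σ.toNNReal with hμ
  -- the difference function
  set f : ℝ → ℝ := fun x => Φ x ^ 2 - x * Φ x * deriv Φ x with hf
  have hΦ0 : Φ 0 = 0 := by have := hodd 0; simp at this; linarith
  have hfnn : 0 ≤ f := by
    intro x
    show (0:ℝ) ≤ Φ x ^ 2 - x * Φ x * deriv Φ x
    by_cases hx : x = 0
    · simp [hx, hΦ0]
    · have := hkey x hx; linarith
  have hfint : Integrable f μ := hint1.sub hint2
  have hsupp : {(0:ℝ)}ᶜ ⊆ Function.support f := by
    intro x hx
    have hgt : (0:ℝ) < Φ x ^ 2 - x * Φ x * deriv Φ x := by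
      have := hkey x hx; linarith
    exact Function.mem_support.mpr (ne_of_gt hgt)
  have hμ0 : μ {(0:ℝ)} = 0 := by
    exact (gaussianReal_absolutelyContinuous b hv) (by simp)
  have hμsupp : 0 < μ (Function.support f) := by
    have h1 : μ {(0:ℝ)}ᶜ = 1 := by
      rw [measure_compl (measurableSet_singleton 0) (by simp [hμ0])]
      simp [hμ0]
    have h2 : (1:ENNReal) ≤ μ (Function.support f) := h1 ▸ measure_mono hsupp
    exact lt_of_lt_of_le (by norm_num) h2
  have hintpos : 0 < ∫ x, f x ∂μ := by
    rw [integral_pos_iff_support_of_nonneg hfnn hfint]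
    exact hμsupp
  have hsub := integral_sub hint1 hint2
  simp only [hf] at hintpos
  simp only [gE, ← hμ]
  linarith [hintpos, hsub]
end

section
/- (Guerra–Latala lemma, generalized form) Let b ∈ ℝ, let f, g: (0,∞) → (0,∞) be differentiable, positive, increasing functions, and let Φ be as in the canonical hypotheses (C², strictly increasing, odd, xΦ''(x)<0 for x≠0). Define Ψ(x) := E_{b, f(x)}[Φ(η)²] / g(x), where η ~ N(b, f(x)). Then Ψ'(x) = Ψ(x) · ( f'(x) c_{b,f(x)}[Φ] / f(x) − g'(x)/g(x) ). In particular, Ψ is decreasing at x whenever g'(x) f(x) ≥ c_{b,f(x)}[Φ] f'(x) g(x), and increasing otherwise. -/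
open MeasureTheory ProbabilityTheory Real Set

/-- The constant `c_{b,σ}[Φ] = E_{b,σ}[(η−b)Φ(η)Φ'(η)] / E_{b,σ}[Φ(η)²]`. -/
noncomputable def cConst (Φ : ℝ → ℝ) (b σ : ℝ) : ℝ :=
  gE b σ (fun x => (x - b) * Φ x * deriv Φ x) / gE b σ (fun x => Φ x ^ 2)

open Filter

lemma integrable_abs_pow_gaussian (n : ℕ) :
    Integrable (fun z : ℝ => |z| ^ n) (gaussianReal 0 1) := by
  rw [gaussianReal_of_var_ne_zero 0 one_ne_zero,
    integrable_withDensity_iff (measurable_gaussianPDF 0 1)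
      (ae_of_all _ fun x => ENNReal.ofReal_lt_top)]
  have hpdf : ∀ x : ℝ, (gaussianPDF 0 1 x).toReal = (√(2 * π))⁻¹ * Real.exp (-x ^ 2 / 2) := by
    intro x
    rw [gaussianPDF, ENNReal.toReal_ofReal (gaussianPDFReal_nonneg _ _ _), gaussianPDFReal]
    norm_num
  have hInt : Integrable (fun x : ℝ => ((n.factorial : ℝ) * (√(2 * π))⁻¹ * Real.exp 1) *
      Real.exp (-(1/4) * x ^ 2)) volume :=
    (integrable_exp_neg_mul_sq (by norm_num : (0:ℝ) < 1/4)).const_mul _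
  refine hInt.mono ?_ (ae_of_all _ fun x => ?_)
  · exact ((measurable_id.abs.pow_const n).mul
      (measurable_gaussianPDF 0 1).ennreal_toReal).aestronglyMeasurable
  · rw [hpdf]
    have h1 : |x| ^ n ≤ (n.factorial : ℝ) * Real.exp |x| := by
      have h := Real.pow_div_factorial_le_exp (x := |x|) (abs_nonneg x) n
      rw [div_le_iff₀ (by positivity)] at h
      linarith [h]
    have h2 : Real.exp |x| * Real.exp (-x ^ 2 / 2) ≤ Real.exp 1 * Real.exp (-(1/4) * x ^ 2) := by
      rw [← Real.exp_add, ← Real.exp_add]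
      apply Real.exp_le_exp.2
      nlinarith [sq_nonneg (|x| - 2), sq_abs x]
    rw [Real.norm_eq_abs, Real.norm_eq_abs]
    refine abs_le_abs ?_ ((neg_nonpos.mpr (by positivity)).trans (by positivity))
    calc |x| ^ n * ((√(2 * π))⁻¹ * Real.exp (-x ^ 2 / 2))
        ≤ ((n.factorial : ℝ) * Real.exp |x|) * ((√(2 * π))⁻¹ * Real.exp (-x ^ 2 / 2)) := by
          apply mul_le_mul_of_nonneg_right h1 (by positivity)
      _ = (n.factorial : ℝ) * (√(2 * π))⁻¹ * (Real.exp |x| * Real.exp (-x ^ 2 / 2)) := by ring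
      _ ≤ (n.factorial : ℝ) * (√(2 * π))⁻¹ * (Real.exp 1 * Real.exp (-(1/4) * x ^ 2)) := by
          apply mul_le_mul_of_nonneg_left h2 (by positivity)
      _ = (n.factorial : ℝ) * (√(2 * π))⁻¹ * Real.exp 1 * Real.exp (-(1/4) * x ^ 2) := by ring

lemma mono_deriv_nonneg {f : ℝ → ℝ} (hf : Differentiable ℝ f) (hm : Monotone f) (x : ℝ) :
    0 ≤ deriv f x := by
  have h := hasDerivAt_iff_tendsto_slope.1 (hf x).hasDerivAt
  have h2 : Tendsto (slope f x) (nhdsWithin x (Ioi x)) (nhds (deriv f x)) :=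
    h.mono_left (nhdsWithin_mono x fun y hy => ne_of_gt hy)
  refine ge_of_tendsto h2 ?_
  filter_upwards [self_mem_nhdsWithin] with y hy
  have hxy : x < y := hy
  rw [slope_def_field]
  exact div_nonneg (sub_nonneg.2 (hm hxy.le)) (sub_nonneg.2 hxy.le)

lemma gauss_map (b s : ℝ) (hs : 0 < s) :
    gaussianReal b s.toNNReal = (gaussianReal 0 1).map (fun z => √s * z + b) := by
  have hv : (NNReal.mk ((√s)^2) (sq_nonneg _) * 1 : NNReal) = s.toNNReal := by
    ext
    simp [Real.sq_sqrt hs.le, Real.toNNReal_of_nonneg hs.le]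
  have h1 : (gaussianReal 0 1).map (fun z : ℝ => √s * z) = gaussianReal 0 s.toNNReal := by
    have h := gaussianReal_map_const_mul (μ := 0) (v := 1) (√s)
    simp only [mul_zero] at h
    rw [hv] at h
    exact h
  have h2 : (gaussianReal 0 s.toNNReal).map (fun z : ℝ => z + b) = gaussianReal b s.toNNReal := by
    have h := gaussianReal_map_add_const (μ := 0) (v := s.toNNReal) b
    simpa using h
  rw [← h2, ← h1, Measure.map_map (measurable_add_const b) (measurable_const_mul _)]
  rfl

lemma gE_eq (b s : ℝ) (hs : 0 < s) {F : ℝ → ℝ} (hF : Continuous F) :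
    gE b s F = ∫ z, F (√s * z + b) ∂(gaussianReal 0 1) := by
  rw [gE, gauss_map b s hs, integral_map (by fun_prop) hF.aestronglyMeasurable]

lemma integrable_of_quad_bound {h : ℝ → ℝ} (hc : Continuous h) (C₀ C₁ C₂ : ℝ)
    (hb : ∀ z, |h z| ≤ C₀ + C₁ * |z| + C₂ * |z| ^ 2) :
    Integrable h (gaussianReal 0 1) := by
  have h1 : Integrable (fun z : ℝ => |z|) (gaussianReal 0 1) := by
    simpa using integrable_abs_pow_gaussian 1
  have h0 : Integrable (fun z : ℝ => C₀ + C₁ * |z| + C₂ * |z| ^ 2) (gaussianReal 0 1) :=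
    ((integrable_const C₀).add (h1.const_mul C₁)).add
      ((integrable_abs_pow_gaussian 2).const_mul C₂)
  refine h0.mono hc.aestronglyMeasurable (ae_of_all _ fun z => ?_)
  rw [Real.norm_eq_abs, Real.norm_eq_abs]
  exact (hb z).trans (le_abs_self _)

lemma int_sq {Φ : ℝ → ℝ} {K : ℝ} (hΦc : Continuous Φ)
    (hlin : ∀ x, |Φ x| ≤ K * |x|) (b s : ℝ) (hs : 0 < s) :
    Integrable (fun z => Φ (√s * z + b) ^ 2) (gaussianReal 0 1) := by
  refine integrable_of_quad_bound (by fun_prop) (K^2 * b^2) (2 * K^2 * √s * |b|) (K^2 * s)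
    fun z => ?_
  have h1 : |Φ (√s * z + b)| ≤ K * (√s * |z| + |b|) := by
    refine (hlin _).trans ?_
    have h2 : |√s * z + b| ≤ √s * |z| + |b| := by
      calc |√s * z + b| ≤ |√s * z| + |b| := abs_add_le _ _
        _ = √s * |z| + |b| := by rw [abs_mul, abs_of_nonneg (Real.sqrt_nonneg s)]
    have hK : 0 ≤ K := by
      have := (abs_nonneg (Φ 1)).trans (hlin 1)
      simpa using this
    exact mul_le_mul_of_nonneg_left h2 hK
  have h3 : |Φ (√s * z + b) ^ 2| = |Φ (√s * z + b)| ^ 2 := by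
    rw [abs_pow]
  rw [h3]
  have h5 := mul_self_le_mul_self (abs_nonneg _) h1
  have h4 : (√s) ^ 2 = s := Real.sq_sqrt hs.le
  set u := √s with hu
  rw [← h4]
  nlinarith [h5, sq_abs b]

lemma gE_sq_pos {Φ : ℝ → ℝ} {K : ℝ} (hΦc : Continuous Φ) (hinj : Function.Injective Φ)
    (hΦ0 : Φ 0 = 0) (hlin : ∀ x, |Φ x| ≤ K * |x|) (b s : ℝ) (hs : 0 < s) :
    0 < gE b s (fun u => Φ u ^ 2) := by
  rw [gE_eq b s hs (by fun_prop)]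
  refine (integral_pos_iff_support_of_nonneg (fun z => sq_nonneg _) (int_sq hΦc hlin b s hs)).2 ?_
  have hsp : 0 < √s := Real.sqrt_pos.2 hs
  have hsub : ({-b / √s}ᶜ : Set ℝ) ⊆ Function.support fun z => Φ (√s * z + b) ^ 2 := by
    intro z hz
    simp only [Function.mem_support, ne_eq]
    intro h
    have hΦz : Φ (√s * z + b) = 0 := by
      have := sq_eq_zero_iff.1 h
      exact this
    have ht : √s * z + b = 0 := hinj (by rw [hΦz, hΦ0])
    apply hz
    simp only [mem_singleton_iff]
    field_simp
    linarith
  have h0 : (gaussianReal 0 1 : Measure ℝ) {-b / √s} = 0 :=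
    gaussianReal_absolutelyContinuous 0 one_ne_zero (measure_singleton _)
  have h1 : (gaussianReal 0 1 : Measure ℝ) ({-b / √s}ᶜ) = 1 := by
    rw [measure_compl (measurableSet_singleton _) (measure_ne_top _ _), h0]
    simp
  calc (0:ENNReal) < 1 := by norm_num
    _ = (gaussianReal 0 1 : Measure ℝ) ({-b / √s}ᶜ) := h1.symm
    _ ≤ _ := measure_mono hsub

lemma key {Φ : ℝ → ℝ} {K : ℝ} (hK0 : 0 ≤ K) (hΦd : Differentiable ℝ Φ)
    (hΦ'c : Continuous (deriv Φ)) (hΦ'b : ∀ x, |deriv Φ x| ≤ K)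
    (hlin : ∀ x, |Φ x| ≤ K * |x|) (b σ : ℝ) (hσ : 0 < σ) :
    HasDerivAt (fun s => gE b s (fun u => Φ u ^ 2))
      (gE b σ (fun u => (u - b) * Φ u * deriv Φ u) / σ) σ := by
  have hΦc : Continuous Φ := hΦd.continuous
  have hσ2 : (0:ℝ) < σ/2 := by linarith
  have hs2 : (0:ℝ) < √(σ/2) := Real.sqrt_pos.2 hσ2
  obtain ⟨-, H⟩ := hasDerivAt_integral_of_dominated_loc_of_deriv_le
    (F := fun s z => Φ (√s * z + b) ^ 2)
    (F' := fun s z => z * (Φ (√s * z + b) * deriv Φ (√s * z + b)) / √s)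
    (μ := gaussianReal 0 1) (x₀ := σ) (s := Metric.ball σ (σ/2))
    (bound := fun z => K^2 / √(σ/2) * (√(2*σ) * |z|^2 + |b| * |z|))
    (Metric.ball_mem_nhds σ hσ2)
    (by
      filter_upwards with s
      exact (Continuous.aestronglyMeasurable (by fun_prop)))
    (int_sq hΦc hlin b σ hσ)
    (Continuous.aestronglyMeasurable (by fun_prop))
    (ae_of_all _ (fun z s hs => by
      have hsball : σ/2 < s ∧ s < 2*σ := by
        rw [Metric.mem_ball, Real.dist_eq, abs_lt] at hs
        constructor <;> linarith [hs.1, hs.2]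
      have hspos : 0 < s := lt_trans hσ2 hsball.1
      have hsqs : √(σ/2) ≤ √s := Real.sqrt_le_sqrt hsball.1.le
      have hsqs2 : √s ≤ √(2*σ) := Real.sqrt_le_sqrt hsball.2.le
      have hsq_pos : 0 < √s := Real.sqrt_pos.2 hspos
      set t := √s * z + b with ht
      have habs : |Φ t| ≤ K * (√(2*σ) * |z| + |b|) := by
        refine (hlin t).trans ?_
        have h2 : |t| ≤ √(2*σ) * |z| + |b| := by
          calc |t| ≤ |√s * z| + |b| := abs_add_le _ _
            _ = √s * |z| + |b| := by rw [abs_mul, abs_of_nonneg hsq_pos.le]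
            _ ≤ √(2*σ) * |z| + |b| := by
                have := mul_le_mul_of_nonneg_right hsqs2 (abs_nonneg z)
                linarith
        exact mul_le_mul_of_nonneg_left h2 hK0
      calc ‖z * (Φ t * deriv Φ t) / √s‖
          = |z| * (|Φ t| * |deriv Φ t|) / √s := by
            rw [Real.norm_eq_abs, abs_div, abs_mul, abs_mul,
              abs_of_nonneg hsq_pos.le]
        _ ≤ |z| * ((K * (√(2*σ) * |z| + |b|)) * K) / √(σ/2) := by
            refine div_le_div₀ (by positivity) ?_ hs2 hsqs
            refine mul_le_mul_of_nonneg_left ?_ (abs_nonneg z)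
            exact mul_le_mul habs (hΦ'b t) (abs_nonneg _) (by positivity)
        _ = K^2 / √(σ/2) * (√(2*σ) * |z|^2 + |b| * |z|) := by
            field_simp))
    (by
      refine Integrable.const_mul ?_ _
      refine Integrable.add ?_ ?_
      · exact (integrable_abs_pow_gaussian 2).const_mul _
      · have h1 : Integrable (fun z : ℝ => |z|) (gaussianReal 0 1) := by
          simpa using integrable_abs_pow_gaussian 1
        exact h1.const_mul _)
    (ae_of_all _ (fun z s hs => by
      have hsball : σ/2 < s ∧ s < 2*σ := by
        rw [Metric.mem_ball, Real.dist_eq, abs_lt] at hs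
        constructor <;> linarith [hs.1, hs.2]
      have hspos : 0 < s := lt_trans hσ2 hsball.1
      have hsq_pos : 0 < √s := Real.sqrt_pos.2 hspos
      have h1 : HasDerivAt (fun r : ℝ => √r * z + b) (1/(2*√s) * z) s :=
        ((Real.hasDerivAt_sqrt hspos.ne').mul_const z).add_const b
      have h2 : HasDerivAt (fun u : ℝ => Φ u ^ 2)
          ((2:ℕ) * Φ (√s * z + b) ^ 1 * deriv Φ (√s * z + b)) (√s * z + b) :=
        (hΦd (√s * z + b)).hasDerivAt.pow 2
      have h3 := h2.comp s h1
      refine h3.congr_deriv ?_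
      field_simp
      ring))
  -- now H : HasDerivAt (fun s => ∫ z, Φ (√s*z+b)^2) (∫ z, z * (Φ.. * deriv Φ..) / √σ) σ
  have hEq : (fun s => gE b s (fun u => Φ u ^ 2)) =ᶠ[nhds σ]
      (fun s => ∫ z, Φ (√s * z + b) ^ 2 ∂(gaussianReal 0 1)) := by
    filter_upwards [Ioi_mem_nhds hσ] with s hs
    exact gE_eq b s hs (by fun_prop)
  have Hval : (∫ z, z * (Φ (√σ * z + b) * deriv Φ (√σ * z + b)) / √σ ∂(gaussianReal 0 1))
      = gE b σ (fun u => (u - b) * Φ u * deriv Φ u) / σ := by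
    rw [gE_eq b σ hσ (by fun_prop)]
    have hsq_pos : 0 < √σ := Real.sqrt_pos.2 hσ
    have hss : √σ * √σ = σ := Real.mul_self_sqrt hσ.le
    have e1 : ∀ z : ℝ, (√σ * z + b - b) * Φ (√σ * z + b) * deriv Φ (√σ * z + b)
        = √σ * (z * (Φ (√σ * z + b) * deriv Φ (√σ * z + b))) := by intro z; ring
    have e2 : ∀ z : ℝ, z * (Φ (√σ * z + b) * deriv Φ (√σ * z + b)) / √σ
        = (√σ)⁻¹ * (z * (Φ (√σ * z + b) * deriv Φ (√σ * z + b))) := by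
      intro z; rw [div_eq_inv_mul]
    simp_rw [e1, e2]
    rw [integral_const_mul, integral_const_mul, eq_div_iff hσ.ne']
    set I := ∫ a, a * (Φ (√σ * a + b) * deriv Φ (√σ * a + b)) ∂(gaussianReal 0 1) with hI
    field_simp
    linear_combination (-I) * hss
  rw [← Hval]
  exact H.congr_of_eventuallyEq hEq

/-- generalized Guerra–Latala lemma: for positive increasing
differentiable `f, g` on `(0,∞)` and canonical `Φ`, the function
`Ψ(x) = E_{b,f(x)}[Φ²]/g(x)` satisfies
`Ψ'(x) = Ψ(x) (f'(x) c_{b,f(x)}[Φ]/f(x) − g'(x)/g(x))`; in particular `Ψ` is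
decreasing at `x` when `g' f ≥ c_{b,f}[Φ] f' g` and increasing otherwise. -/
theorem guerra_latala
    (Φ : ℝ → ℝ) (hC2 : ContDiff ℝ 2 Φ) (hmono : StrictMono Φ)
    (hodd : ∀ x, Φ (-x) = -Φ x)
    (hconc : ∀ x ≠ 0, x * deriv (deriv Φ) x < 0)
    (hint : Integrable (fun x => |Φ x|) (gaussianReal 0 1))
    (b : ℝ) (f g : ℝ → ℝ)
    (hfpos : ∀ x ∈ Ioi (0:ℝ), 0 < f x) (hgpos : ∀ x ∈ Ioi (0:ℝ), 0 < g x)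
    (hfdiff : ∀ x ∈ Ioi (0:ℝ), DifferentiableAt ℝ f x)
    (hgdiff : ∀ x ∈ Ioi (0:ℝ), DifferentiableAt ℝ g x)
    (hfmono : MonotoneOn f (Ioi 0)) (hgmono : MonotoneOn g (Ioi 0)) :
    ∀ x ∈ Ioi (0:ℝ),
      HasDerivAt (fun y => gE b (f y) (fun u => Φ u ^ 2) / g y)
        ((gE b (f x) (fun u => Φ u ^ 2) / g x) *
          (deriv f x * cConst Φ b (f x) / f x - deriv g x / g x)) x ∧
      (deriv g x * f x ≥ cConst Φ b (f x) * deriv f x * g x →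
        deriv (fun y => gE b (f y) (fun u => Φ u ^ 2) / g y) x ≤ 0) ∧
      (deriv g x * f x < cConst Φ b (f x) * deriv f x * g x →
        0 < deriv (fun y => gE b (f y) (fun u => Φ u ^ 2) / g y) x) := by
  -- basic facts about Φ
  have hΦd : Differentiable ℝ Φ := hC2.differentiable (by norm_num)
  have hΦc : Continuous Φ := hΦd.continuous
  have hΦ'c : Continuous (deriv Φ) := hC2.continuous_deriv (by norm_num)
  have hΦ0 : Φ 0 = 0 := by have h := hodd 0; simp at h; linarith
  set K := deriv Φ 0 with hK
  have hΦ'nonneg : ∀ x, 0 ≤ deriv Φ x := mono_deriv_nonneg hΦd hmono.monotone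
  have hK0 : 0 ≤ K := hΦ'nonneg 0
  have hanti : StrictAntiOn (deriv Φ) (Ici 0) := by
    refine strictAntiOn_of_deriv_neg (convex_Ici 0) hΦ'c.continuousOn fun x hx => ?_
    rw [interior_Ici] at hx
    have h := hconc x (ne_of_gt hx)
    nlinarith [mem_Ioi.1 hx]
  have heven : ∀ x, deriv Φ (-x) = deriv Φ x := by
    intro x
    have h1 : HasDerivAt (fun y => Φ (-y)) (deriv Φ (-x) * (-1)) x :=
      (hΦd (-x)).hasDerivAt.comp x (hasDerivAt_neg x)
    have h2 : HasDerivAt (fun y => -Φ y) (-deriv Φ x) x := (hΦd x).hasDerivAt.neg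
    have h3 : (fun y => Φ (-y)) = fun y => -Φ y := funext fun y => hodd y
    rw [h3] at h1
    have := h1.unique h2
    linarith
  have hle : ∀ x, deriv Φ x ≤ K := by
    intro x
    rcases le_total 0 x with h | h
    · exact hanti.antitoneOn self_mem_Ici h h
    · calc deriv Φ x = deriv Φ (-(-x)) := by rw [neg_neg]
        _ = deriv Φ (-x) := heven (-x)
        _ ≤ K := hanti.antitoneOn self_mem_Ici (by simpa using h) (by simpa using h)
  have hΦ'b : ∀ x, |deriv Φ x| ≤ K := fun x => by
    rw [abs_of_nonneg (hΦ'nonneg x)]; exact hle x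
  have hlin : ∀ x, |Φ x| ≤ K * |x| := by
    intro x
    have h := convex_univ.norm_image_sub_le_of_norm_deriv_le (s := univ) (fun y _ => hΦd y)
      (fun y _ => by rw [Real.norm_eq_abs]; exact hΦ'b y) (mem_univ 0) (mem_univ x)
    simpa [hΦ0, Real.norm_eq_abs] using h
  -- main part
  intro x hx
  have hfx : 0 < f x := hfpos x hx
  have hgx : 0 < g x := hgpos x hx
  have hE2pos : 0 < gE b (f x) (fun u => Φ u ^ 2) :=
    gE_sq_pos hΦc hmono.injective hΦ0 hlin b (f x) hfx
  set E1 := gE b (f x) (fun u => (u - b) * Φ u * deriv Φ u) with hE1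
  set E2 := gE b (f x) (fun u => Φ u ^ 2) with hE2
  have Hh : HasDerivAt (fun s => gE b s (fun u => Φ u ^ 2)) (E1 / f x) (f x) :=
    key hK0 hΦd hΦ'c hΦ'b hlin b (f x) hfx
  have Hcomp : HasDerivAt (fun y => gE b (f y) (fun u => Φ u ^ 2)) (E1 / f x * deriv f x) x :=
    Hh.comp x (hfdiff x hx).hasDerivAt
  have Hdiv := Hcomp.div (hgdiff x hx).hasDerivAt (ne_of_gt hgx)
  have hcc : cConst Φ b (f x) = E1 / E2 := rfl
  have Hmain : HasDerivAt (fun y => gE b (f y) (fun u => Φ u ^ 2) / g y)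
      (E2 / g x * (deriv f x * cConst Φ b (f x) / f x - deriv g x / g x)) x := by
    refine HasDerivAt.congr_deriv Hdiv ?_
    rw [hcc]
    field_simp
    ring
  refine ⟨Hmain, ?_, ?_⟩ <;> rw [Hmain.deriv]
  · intro hge
    have hterm : deriv f x * cConst Φ b (f x) / f x - deriv g x / g x ≤ 0 := by
      rw [sub_nonpos, div_le_div_iff₀ hfx hgx]
      nlinarith [hge]
    exact mul_nonpos_of_nonneg_of_nonpos (le_of_lt (div_pos hE2pos hgx)) hterm
  · intro hlt
    have hterm : 0 < deriv f x * cConst Φ b (f x) / f x - deriv g x / g x := by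
      rw [sub_pos, div_lt_div_iff₀ hgx hfx]
      nlinarith [hlt]
    exact mul_pos (div_pos hE2pos hgx) hterm
end

section
/- Let b ∈ ℝ, Φ as in the canonical hypotheses, and f, g: (0,∞) → (0,∞) differentiable, positive and increasing with f/g non-increasing. Then x ↦ E_{b,f(x)}[Φ(η)²] / g(x) is non-increasing. -/
open MeasureTheory ProbabilityTheory Real Set
open scoped NNReal ENNReal

section PhiFacts
variable {Φ : ℝ → ℝ}

lemma phi_zero (hodd : ∀ x, Φ (-x) = -Φ x) : Φ 0 = 0 := by
  have := hodd 0; simp at this; linarith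

lemma phi_diff (hC2 : ContDiff ℝ 2 Φ) : Differentiable ℝ Φ :=
  hC2.differentiable (by norm_num)

lemma phi_deriv_diff (hC2 : ContDiff ℝ 2 Φ) : Differentiable ℝ (deriv Φ) :=
  (hC2.iterate_deriv' 1 1).differentiable (by norm_num)

lemma phi_deriv_even (hC2 : ContDiff ℝ 2 Φ) (hodd : ∀ x, Φ (-x) = -Φ x) (x : ℝ) :
    deriv Φ (-x) = deriv Φ x := by
  have h1 : HasDerivAt (fun y => Φ (-y)) (deriv Φ (-x) * (-1)) x :=
    ((phi_diff hC2 (-x)).hasDerivAt).comp x (hasDerivAt_neg x)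
  have h2 : HasDerivAt (fun y => -Φ y) (-(deriv Φ x)) x :=
    ((phi_diff hC2 x).hasDerivAt).neg
  have heq : (fun y => Φ (-y)) = fun y => -Φ y := funext hodd
  rw [heq] at h1
  have := h1.unique h2
  linarith

lemma phi_deriv_nonneg (hC2 : ContDiff ℝ 2 Φ) (hmono : StrictMono Φ) (x : ℝ) :
    0 ≤ deriv Φ x := by
  have h := (phi_diff hC2 x).hasDerivAt
  rw [hasDerivAt_iff_tendsto_slope] at h
  refine ge_of_tendsto h ?_
  filter_upwards [self_mem_nhdsWithin] with y hy
  rw [slope_def_field]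
  rcases lt_or_gt_of_ne (show y ≠ x from hy) with hlt | hgt
  · have h1 : Φ y ≤ Φ x := hmono.monotone hlt.le
    have h2 : y - x < 0 := by linarith
    have := div_nonneg (b := x - y) (by linarith : (0:ℝ) ≤ Φ x - Φ y) (by linarith)
    rw [show Φ x - Φ y = -(Φ y - Φ x) by ring, show x - y = -(y-x) by ring, neg_div_neg_eq] at this
    exact this
  · exact div_nonneg (sub_nonneg.2 (hmono.monotone hgt.le)) (by linarith)

lemma phi_deriv_anti (hC2 : ContDiff ℝ 2 Φ)
    (hconc : ∀ x ≠ 0, x * deriv (deriv Φ) x < 0) : AntitoneOn (deriv Φ) (Ici 0) := by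
  apply antitoneOn_of_deriv_nonpos (convex_Ici 0)
    (phi_deriv_diff hC2).continuous.continuousOn
    ((phi_deriv_diff hC2).differentiableOn)
  intro x hx
  rw [interior_Ici] at hx
  have := hconc x (ne_of_gt hx)
  nlinarith [hx.out]

lemma phi_deriv_le (hC2 : ContDiff ℝ 2 Φ) (hodd : ∀ x, Φ (-x) = -Φ x)
    (hconc : ∀ x ≠ 0, x * deriv (deriv Φ) x < 0) (x : ℝ) : deriv Φ x ≤ deriv Φ 0 := by
  rcases le_or_gt 0 x with h | h
  · exact phi_deriv_anti hC2 hconc self_mem_Ici h h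
  · rw [← phi_deriv_even hC2 hodd]
    exact phi_deriv_anti hC2 hconc self_mem_Ici (by simp; linarith) (by linarith)

lemma phi_nonneg (hmono : StrictMono Φ) (hodd : ∀ x, Φ (-x) = -Φ x) {x : ℝ} (hx : 0 ≤ x) :
    0 ≤ Φ x := by
  rw [← phi_zero hodd]; exact hmono.monotone hx

lemma phi_abs_le (hC2 : ContDiff ℝ 2 Φ) (hmono : StrictMono Φ) (hodd : ∀ x, Φ (-x) = -Φ x)
    (hconc : ∀ x ≠ 0, x * deriv (deriv Φ) x < 0) (x : ℝ) : |Φ x| ≤ deriv Φ 0 * |x| := by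
  have key : ∀ y : ℝ, 0 < y → Φ y ≤ deriv Φ 0 * y := by
    intro y hy
    obtain ⟨c, _, hc⟩ := exists_hasDerivAt_eq_slope Φ (deriv Φ) hy
      (phi_diff hC2).continuous.continuousOn
      (fun u _ => (phi_diff hC2 u).hasDerivAt)
    rw [phi_zero hodd, sub_zero, sub_zero] at hc
    have h0 : Φ y = deriv Φ c * y := by field_simp at hc ⊢; linarith [hc]
    rw [h0]
    exact mul_le_mul_of_nonneg_right (phi_deriv_le hC2 hodd hconc c) hy.le
  rcases lt_trichotomy x 0 with h | h | h
  · rw [abs_of_neg h, abs_of_nonpos (by rw [← neg_nonneg, ← hodd]; exact phi_nonneg hmono hodd (by linarith))]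
    have := key (-x) (by linarith)
    rw [hodd] at this; linarith
  · simp [h, phi_zero hodd]
  · rw [abs_of_pos h, abs_of_nonneg (phi_nonneg hmono hodd h.le)]
    exact key x h

/-- key pointwise inequality: `x Φ(x) Φ'(x) ≤ Φ(x)²`. -/
lemma phi_key (hC2 : ContDiff ℝ 2 Φ) (hmono : StrictMono Φ) (hodd : ∀ x, Φ (-x) = -Φ x)
    (hconc : ∀ x ≠ 0, x * deriv (deriv Φ) x < 0) (x : ℝ) :
    x * (Φ x * deriv Φ x) ≤ Φ x ^ 2 := by
  have key : ∀ y : ℝ, 0 < y → y * (Φ y * deriv Φ y) ≤ Φ y ^ 2 := by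
    intro y hy
    obtain ⟨c, hcmem, hc⟩ := exists_hasDerivAt_eq_slope Φ (deriv Φ) hy
      (phi_diff hC2).continuous.continuousOn
      (fun u _ => (phi_diff hC2 u).hasDerivAt)
    rw [phi_zero hodd, sub_zero, sub_zero] at hc
    have h0 : Φ y = deriv Φ c * y := by field_simp at hc ⊢; linarith [hc]
    have h1 : deriv Φ y ≤ deriv Φ c :=
      phi_deriv_anti hC2 hconc (le_of_lt hcmem.1) (by simp; linarith [hcmem.2, hy]) hcmem.2.le
    have h2 : y * deriv Φ y ≤ Φ y := by rw [h0]; nlinarith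
    have h3 : 0 ≤ Φ y := phi_nonneg hmono hodd hy.le
    nlinarith
  rcases lt_trichotomy x 0 with h | h | h
  · have := key (-x) (by linarith)
    rw [hodd, phi_deriv_even hC2 hodd] at this
    nlinarith
  · simp [h]; positivity
  · exact key x h

end PhiFacts

section GaussTools

lemma gaussian_pdf_toReal (b : ℝ) (v : ℝ≥0) (x : ℝ) :
    (gaussianPDF b v x).toReal = gaussianPDFReal b v x :=
  ENNReal.toReal_ofReal (gaussianPDFReal_nonneg b v x)

lemma gaussian_integrable_quadratic : Integrable (fun z : ℝ => 1 + z ^ 2) (gaussianReal 0 1) := by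
  rw [gaussianReal_of_var_ne_zero 0 one_ne_zero,
    integrable_withDensity_iff (measurable_gaussianPDF 0 1)
      (Filter.Eventually.of_forall fun x => ENNReal.ofReal_lt_top)]
  have hint : Integrable (fun z : ℝ => (√(2 * π))⁻¹ * (5 * rexp (-(1/4) * z ^ 2))) volume :=
    ((integrable_exp_neg_mul_sq (by norm_num : (0:ℝ) < 1/4)).const_mul 5).const_mul _
  apply hint.mono'
  · exact ((measurable_const.add ((measurable_id : Measurable fun z : ℝ => z).pow_const 2)).mul
      (measurable_gaussianPDF 0 1).ennreal_toReal).aestronglyMeasurable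
  · refine Filter.Eventually.of_forall fun z => ?_
    rw [gaussian_pdf_toReal]
    have hpdf : gaussianPDFReal 0 1 z = (√(2 * π))⁻¹ * rexp (-(z ^ 2) / 2) := by
      rw [gaussianPDFReal]
      norm_num
    have h1 : 0 ≤ 1 + z ^ 2 := by positivity
    have hnn : 0 ≤ gaussianPDFReal 0 1 z := gaussianPDFReal_nonneg 0 1 z
    rw [Real.norm_eq_abs, abs_of_nonneg (mul_nonneg h1 hnn), hpdf]
    have key : (1 + z ^ 2) * rexp (-(z ^ 2) / 2) ≤ 5 * rexp (-(1/4) * z ^ 2) := by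
      have e1 : 1 + z ^ 2 / 4 ≤ rexp (z ^ 2 / 4) := Real.add_one_le_exp (z ^ 2 / 4) |>.trans_eq' (by ring_nf)
      have e2 : rexp (z ^ 2 / 4) * rexp (-(z ^ 2) / 2) = rexp (-(1/4) * z ^ 2) := by
        rw [← Real.exp_add]; ring_nf
      have e3 : 0 < rexp (-(z ^ 2) / 2) := Real.exp_pos _
      calc (1 + z ^ 2) * rexp (-(z ^ 2) / 2)
          ≤ 5 * rexp (z ^ 2 / 4) * rexp (-(z ^ 2) / 2) := by nlinarith
        _ = 5 * rexp (-(1/4) * z ^ 2) := by rw [mul_assoc, e2]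
    have hc : (0:ℝ) ≤ (√(2 * π))⁻¹ := by positivity
    calc (1 + z ^ 2) * ((√(2 * π))⁻¹ * rexp (-(z ^ 2) / 2))
        = (√(2 * π))⁻¹ * ((1 + z ^ 2) * rexp (-(z ^ 2) / 2)) := by ring
      _ ≤ (√(2 * π))⁻¹ * (5 * rexp (-(1/4) * z ^ 2)) := by
          exact mul_le_mul_of_nonneg_left key hc

/-- domination: quadratically bounded measurable functions are Gaussian-integrable -/
lemma gaussian_integrable_of_le {h : ℝ → ℝ} (C : ℝ)
    (hm : AEStronglyMeasurable h (gaussianReal 0 1))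
    (hb : ∀ z, |h z| ≤ C * (1 + z ^ 2)) : Integrable h (gaussianReal 0 1) := by
  apply (gaussian_integrable_quadratic.const_mul C).mono' hm
  refine Filter.Eventually.of_forall fun z => ?_
  rw [Real.norm_eq_abs]
  exact hb z

lemma gaussian_map_std (b : ℝ) (v : ℝ≥0) :
    Measure.map (fun z => √v * z + b) (gaussianReal 0 1) = gaussianReal b v := by
  have h1 : Measure.map (fun z : ℝ => √v * z) (gaussianReal 0 1) = gaussianReal 0 v := by
    rw [gaussianReal_map_const_mul (√(v : ℝ))]
    congr 1
    · ring
    · ext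
      simp [Real.sq_sqrt v.2]
  have h2 : Measure.map (fun x : ℝ => x + b) (gaussianReal 0 v) = gaussianReal b v := by
    rw [gaussianReal_map_add_const b, zero_add]
  rw [← h2, ← h1, Measure.map_map (measurable_add_const b) (measurable_const_mul _)]
  rfl

lemma gaussian_integral_comp (b : ℝ) (v : ℝ≥0) {h : ℝ → ℝ} (hc : Continuous h) :
    ∫ u, h u ∂(gaussianReal b v) = ∫ z, h (√v * z + b) ∂(gaussianReal 0 1) := by
  rw [← gaussian_map_std b v]
  exact integral_map (((measurable_id.const_mul _).add_const b).aemeasurable)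
    hc.aestronglyMeasurable

lemma gaussian_integrable_comp (b : ℝ) (v : ℝ≥0) {h : ℝ → ℝ} (hc : Continuous h) :
    Integrable h (gaussianReal b v) ↔
      Integrable (fun z => h (√v * z + b)) (gaussianReal 0 1) := by
  rw [← gaussian_map_std b v]
  exact integrable_map_measure hc.aestronglyMeasurable
    (((measurable_id.const_mul _).add_const b).aemeasurable)

end GaussTools

section Refl
variable {Φ : ℝ → ℝ}

lemma gaussian_map_neg (b : ℝ) (v : ℝ≥0) :
    Measure.map (fun u : ℝ => -u) (gaussianReal b v) = gaussianReal (-b) v := by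
  have h := gaussianReal_map_const_mul (μ := b) (v := v) (-1)
  have hfun : (fun x : ℝ => (-1 : ℝ) * x) = fun u : ℝ => -u := by funext u; ring
  rw [hfun] at h
  rw [h]
  congr 1
  · ring
  · ext; simp

lemma gaussian_pdf_refl {b : ℝ} (hb : 0 ≤ b) (v : ℝ≥0) {u : ℝ} (hu : 0 ≤ u) :
    gaussianPDFReal (-b) v u ≤ gaussianPDFReal b v u := by
  rcases eq_or_ne v 0 with hv | hv
  · simp [hv]
  · have hvpos : (0:ℝ) < v := lt_of_le_of_ne v.2 (by exact_mod_cast Ne.symm hv)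
    rw [gaussianPDFReal, gaussianPDFReal]
    apply mul_le_mul_of_nonneg_left _ (by positivity)
    apply Real.exp_le_exp.2
    rw [div_le_div_iff_of_pos_right (by positivity)]
    nlinarith

end Refl

section Refl2

lemma gaussian_singleton_null {b : ℝ} {v : ℝ≥0} (hv : v ≠ 0) (a : ℝ) :
    gaussianReal b v {a} = 0 :=
  gaussianReal_absolutelyContinuous b hv Real.volume_singleton

lemma gaussian_refl_nonneg (q : ℝ → ℝ) (hqc : Continuous q)
    (hqodd : ∀ u, q (-u) = -q u) (hqpos : ∀ u, 0 ≤ u → 0 ≤ q u)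
    {b : ℝ} (hb : 0 ≤ b) {v : ℝ≥0} (hv : v ≠ 0)
    (hqint : Integrable q (gaussianReal b v))
    (hqint' : Integrable q (gaussianReal (-b) v)) :
    0 ≤ ∫ u, q u ∂(gaussianReal b v) := by
  set μ := gaussianReal b v with hμ
  set ν := gaussianReal (-b) v with hν
  -- step 1 : ∫_{Iio 0} q ∂μ = - ∫_{Ioi 0} q ∂ν
  have hmapν : Measure.map (fun u : ℝ => -u) ν = μ := by
    rw [hν, gaussian_map_neg, neg_neg]
  have step1 : ∫ u in Iio 0, q u ∂μ = - ∫ u in Ioi 0, q u ∂ν := by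
    rw [← integral_indicator measurableSet_Iio, ← hmapν,
      integral_map measurable_neg.aemeasurable
        (hqc.aestronglyMeasurable.indicator measurableSet_Iio)]
    have hpt : ∀ u : ℝ, (Iio (0:ℝ)).indicator q (-u) = -((Ioi (0:ℝ)).indicator q u) := by
      intro u
      by_cases hu : u ∈ Ioi (0:ℝ)
      · have : -u ∈ Iio (0:ℝ) := by simp at hu ⊢; linarith
        rw [indicator_of_mem this, indicator_of_mem hu, hqodd]
      · have : -u ∉ Iio (0:ℝ) := by simp at hu ⊢; linarith
        rw [indicator_of_notMem this, indicator_of_notMem hu, neg_zero]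
    simp_rw [hpt]
    rw [integral_neg, integral_indicator measurableSet_Ioi]
  -- step 2 : ∫_{Ioi 0} q ∂ν ≤ ∫_{Ioi 0} q ∂μ
  have step2 : ∫ u in Ioi 0, q u ∂ν ≤ ∫ u in Ioi 0, q u ∂μ := by
    apply integral_mono_measure
    · rw [hμ, hν, gaussianReal_of_var_ne_zero _ hv, gaussianReal_of_var_ne_zero _ hv,
        restrict_withDensity measurableSet_Ioi, restrict_withDensity measurableSet_Ioi]
      apply withDensity_mono
      rw [Filter.EventuallyLE, ae_restrict_iff' measurableSet_Ioi]
      refine Filter.Eventually.of_forall fun u hu => ?_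
      exact ENNReal.ofReal_le_ofReal (gaussian_pdf_refl hb v (le_of_lt hu))
    · rw [Filter.EventuallyLE, ae_restrict_iff' measurableSet_Ioi]
      exact Filter.Eventually.of_forall fun u hu => hqpos u (le_of_lt hu)
    · exact hqint.restrict
  -- step 3 : ∫_{Ici 0} q ∂μ = ∫_{Ioi 0} q ∂μ
  have step3 : ∫ u in Ici 0, q u ∂μ = ∫ u in Ioi 0, q u ∂μ := by
    apply setIntegral_congr_set
    rw [ae_eq_set]
    constructor
    · rw [Ici_sdiff_Ioi, Icc_self]; exact gaussian_singleton_null hv 0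
    · rw [diff_eq_empty.2 Ioi_subset_Ici_self]; exact measure_empty
  have split : ∫ u in Iio 0, q u ∂μ + ∫ u in Ici 0, q u ∂μ = ∫ u, q u ∂μ := by
    have := integral_add_compl (measurableSet_Iio (a := (0:ℝ))) hqint
    rwa [compl_Iio] at this
  rw [← split, step1, step3]
  linarith [step2]

lemma gaussian_refl_mul_nonneg (q : ℝ → ℝ) (hqc : Continuous q)
    (hqodd : ∀ u, q (-u) = -q u) (hqpos : ∀ u, 0 ≤ u → 0 ≤ q u)
    (b : ℝ) {v : ℝ≥0} (hv : v ≠ 0)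
    (hqint : ∀ c : ℝ, Integrable q (gaussianReal c v)) :
    0 ≤ b * ∫ u, q u ∂(gaussianReal b v) := by
  rcases le_or_gt 0 b with hb | hb
  · exact mul_nonneg hb (gaussian_refl_nonneg q hqc hqodd hqpos hb hv (hqint b) (hqint (-b)))
  · have hmap : Measure.map (fun u : ℝ => -u) (gaussianReal (-b) v) = gaussianReal b v := by
      rw [gaussian_map_neg, neg_neg]
    have heq : ∫ u, q u ∂(gaussianReal b v) = - ∫ u, q u ∂(gaussianReal (-b) v) := by
      rw [← hmap, integral_map measurable_neg.aemeasurable hqc.aestronglyMeasurable]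
      simp_rw [hqodd]
      exact integral_neg q
    have hpos : 0 ≤ ∫ u, q u ∂(gaussianReal (-b) v) :=
      gaussian_refl_nonneg q hqc hqodd hqpos (by linarith) hv (hqint (-b))
        (by rw [neg_neg]; exact hqint b)
    rw [heq]
    nlinarith

end Refl2

section Core
variable {Φ : ℝ → ℝ}

lemma abs_le_one_add_sq (z : ℝ) : |z| ≤ 1 + z ^ 2 := by
  nlinarith [sq_nonneg (|z| - 1), sq_abs z, abs_nonneg z]

section Bounds
variable (hC2 : ContDiff ℝ 2 Φ) (hmono : StrictMono Φ) (hodd : ∀ x, Φ (-x) = -Φ x)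
    (hconc : ∀ x ≠ 0, x * deriv (deriv Φ) x < 0)

private lemma alg1 (K A B Z : ℝ) (hA : 0 ≤ A) (hB : 0 ≤ B) (hZ : 0 ≤ Z) :
    (K * (A * Z + B)) ^ 2 ≤ 2 * K ^ 2 * (A ^ 2 + B ^ 2) * (1 + Z ^ 2) := by
  have h1 : (A * Z + B) ^ 2 ≤ 2 * (A ^ 2 * Z ^ 2 + B ^ 2) := by nlinarith [sq_nonneg (A * Z - B)]
  have h2 : 2 * (A ^ 2 * Z ^ 2 + B ^ 2) ≤ 2 * (A ^ 2 + B ^ 2) * (1 + Z ^ 2) := by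
    nlinarith [sq_nonneg A, sq_nonneg B, sq_nonneg Z, mul_nonneg (sq_nonneg A) (sq_nonneg Z),
      mul_nonneg (sq_nonneg B) (sq_nonneg Z)]
  calc (K * (A * Z + B)) ^ 2 = K ^ 2 * (A * Z + B) ^ 2 := by ring
    _ ≤ K ^ 2 * (2 * (A ^ 2 * Z ^ 2 + B ^ 2)) := mul_le_mul_of_nonneg_left h1 (sq_nonneg K)
    _ ≤ K ^ 2 * (2 * (A ^ 2 + B ^ 2) * (1 + Z ^ 2)) :=
        mul_le_mul_of_nonneg_left (by linarith) (sq_nonneg K)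
    _ = 2 * K ^ 2 * (A ^ 2 + B ^ 2) * (1 + Z ^ 2) := by ring

private lemma alg2 (K A B Z : ℝ) (hB : 0 ≤ B) (hZ : 0 ≤ Z) (hA : 0 ≤ A)
    (hZ1 : Z ≤ 1 + Z ^ 2) :
    2 * (Z * (K * (A * Z + B)) * K) ≤ 2 * K ^ 2 * (A + B) * (1 + Z ^ 2) := by
  have h1 : Z * (A * Z + B) ≤ (A + B) * (1 + Z ^ 2) := by
    have e1 : A * Z ^ 2 ≤ A * (1 + Z ^ 2) := by nlinarith
    have e2 : B * Z ≤ B * (1 + Z ^ 2) := mul_le_mul_of_nonneg_left hZ1 hB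
    nlinarith
  calc 2 * (Z * (K * (A * Z + B)) * K) = 2 * K ^ 2 * (Z * (A * Z + B)) := by ring
    _ ≤ 2 * K ^ 2 * ((A + B) * (1 + Z ^ 2)) := mul_le_mul_of_nonneg_left h1 (by positivity)
    _ = 2 * K ^ 2 * (A + B) * (1 + Z ^ 2) := by ring

private lemma alg3 (K A B Z : ℝ) (hA : 0 ≤ A) (hB : 0 ≤ B) (hZ : 0 ≤ Z) :
    2 * ((A * Z + B) * (K * (A * Z + B)) * K) ≤ 4 * K ^ 2 * (A ^ 2 + B ^ 2) * (1 + Z ^ 2) := by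
  have h1 : (A * Z + B) ^ 2 ≤ 2 * (A ^ 2 + B ^ 2) * (1 + Z ^ 2) := by
    nlinarith [sq_nonneg (A * Z - B), mul_nonneg (sq_nonneg A) (sq_nonneg Z),
      mul_nonneg (sq_nonneg B) (sq_nonneg Z), sq_nonneg A, sq_nonneg B, sq_nonneg Z]
  calc 2 * ((A * Z + B) * (K * (A * Z + B)) * K) = 2 * K ^ 2 * (A * Z + B) ^ 2 := by ring
    _ ≤ 2 * K ^ 2 * (2 * (A ^ 2 + B ^ 2) * (1 + Z ^ 2)) :=
        mul_le_mul_of_nonneg_left h1 (by positivity)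
    _ = 4 * K ^ 2 * (A ^ 2 + B ^ 2) * (1 + Z ^ 2) := by ring

private lemma alg4 (K A B Z : ℝ) (hB : 0 ≤ B) (hZ : 0 ≤ Z) (hA : 0 ≤ A)
    (hZ1 : Z ≤ 1 + Z ^ 2) :
    K * (A * Z + B) * K ≤ K ^ 2 * (A + B) * (1 + Z ^ 2) := by
  have h1 : A * Z + B ≤ (A + B) * (1 + Z ^ 2) := by nlinarith
  calc K * (A * Z + B) * K = K ^ 2 * (A * Z + B) := by ring
    _ ≤ K ^ 2 * ((A + B) * (1 + Z ^ 2)) := mul_le_mul_of_nonneg_left h1 (sq_nonneg K)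
    _ = K ^ 2 * (A + B) * (1 + Z ^ 2) := by ring

private lemma abs_z_le (z : ℝ) : |z| ≤ 1 + |z| ^ 2 := by
  rw [sq_abs]; exact abs_le_one_add_sq z

include hC2 hmono hodd hconc

private lemma bnd_basic (s c z : ℝ) :
    |Φ (s * z + c)| ≤ deriv Φ 0 * (|s| * |z| + |c|) := by
  have h1 := phi_abs_le hC2 hmono hodd hconc (s * z + c)
  have h2 : |s * z + c| ≤ |s| * |z| + |c| :=
    (abs_add_le _ _).trans (by rw [abs_mul])
  have hK0 : 0 ≤ deriv Φ 0 := phi_deriv_nonneg hC2 hmono 0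
  calc |Φ (s * z + c)| ≤ deriv Φ 0 * |s * z + c| := h1
    _ ≤ deriv Φ 0 * (|s| * |z| + |c|) := mul_le_mul_of_nonneg_left h2 hK0

private lemma bnd_deriv (x : ℝ) : |deriv Φ x| ≤ deriv Φ 0 := by
  rw [abs_of_nonneg (phi_deriv_nonneg hC2 hmono _)]
  exact phi_deriv_le hC2 hodd hconc _

private lemma bnd1 (s c z : ℝ) :
    |Φ (s * z + c) ^ 2| ≤ 2 * deriv Φ 0 ^ 2 * (s ^ 2 + c ^ 2) * (1 + z ^ 2) := by
  have h := bnd_basic hC2 hmono hodd hconc s c z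
  have habs : (0:ℝ) ≤ |Φ (s * z + c)| := abs_nonneg _
  rw [abs_of_nonneg (sq_nonneg _), ← sq_abs (Φ (s * z + c))]
  have h3 : |Φ (s * z + c)| ^ 2 ≤ (deriv Φ 0 * (|s| * |z| + |c|)) ^ 2 :=
    pow_le_pow_left₀ habs h 2
  refine h3.trans ?_
  have := alg1 (deriv Φ 0) |s| |c| |z| (abs_nonneg s) (abs_nonneg c) (abs_nonneg z)
  rwa [sq_abs, sq_abs, sq_abs] at this

private lemma bnd2 (s c z : ℝ) :
    |z * (2 * Φ (s * z + c) * deriv Φ (s * z + c))| ≤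
      2 * deriv Φ 0 ^ 2 * (|s| + |c|) * (1 + z ^ 2) := by
  have h := bnd_basic hC2 hmono hodd hconc s c z
  have hd := bnd_deriv hC2 hmono hodd hconc (s * z + c)
  have hK0 : 0 ≤ deriv Φ 0 := phi_deriv_nonneg hC2 hmono 0
  have e : |z * (2 * Φ (s * z + c) * deriv Φ (s * z + c))| =
      2 * (|z| * |Φ (s * z + c)| * |deriv Φ (s * z + c)|) := by
    rw [abs_mul, abs_mul, abs_mul]
    rw [abs_of_nonneg (by norm_num : (0:ℝ) ≤ 2)]; ring
  rw [e]
  have h1 : |z| * |Φ (s * z + c)| * |deriv Φ (s * z + c)| ≤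
      |z| * (deriv Φ 0 * (|s| * |z| + |c|)) * deriv Φ 0 := by
    apply mul_le_mul _ hd (abs_nonneg _) (by positivity)
    exact mul_le_mul_of_nonneg_left h (abs_nonneg z)
  refine (mul_le_mul_of_nonneg_left h1 (by norm_num : (0:ℝ) ≤ 2)).trans ?_
  have := alg2 (deriv Φ 0) |s| |c| |z| (abs_nonneg c) (abs_nonneg z) (abs_nonneg s) (abs_z_le z)
  rwa [sq_abs] at this

private lemma bnd3 (s c z : ℝ) :
    |(s * z + c) * (2 * Φ (s * z + c) * deriv Φ (s * z + c))| ≤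
      4 * deriv Φ 0 ^ 2 * (s ^ 2 + c ^ 2) * (1 + z ^ 2) := by
  have h := bnd_basic hC2 hmono hodd hconc s c z
  have hd := bnd_deriv hC2 hmono hodd hconc (s * z + c)
  have hK0 : 0 ≤ deriv Φ 0 := phi_deriv_nonneg hC2 hmono 0
  have h2 : |s * z + c| ≤ |s| * |z| + |c| := (abs_add_le _ _).trans (by rw [abs_mul])
  have e : |(s * z + c) * (2 * Φ (s * z + c) * deriv Φ (s * z + c))| =
      2 * (|s * z + c| * |Φ (s * z + c)| * |deriv Φ (s * z + c)|) := by
    rw [abs_mul, abs_mul, abs_mul]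
    rw [abs_of_nonneg (by norm_num : (0:ℝ) ≤ 2)]; ring
  rw [e]
  have h1 : |s * z + c| * |Φ (s * z + c)| * |deriv Φ (s * z + c)| ≤
      (|s| * |z| + |c|) * (deriv Φ 0 * (|s| * |z| + |c|)) * deriv Φ 0 := by
    apply mul_le_mul _ hd (abs_nonneg _) (by positivity)
    exact mul_le_mul h2 h (abs_nonneg _) (by positivity)
  refine (mul_le_mul_of_nonneg_left h1 (by norm_num : (0:ℝ) ≤ 2)).trans ?_
  have := alg3 (deriv Φ 0) |s| |c| |z| (abs_nonneg s) (abs_nonneg c) (abs_nonneg z)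
  rwa [sq_abs, sq_abs, sq_abs] at this

private lemma bnd4 (s c z : ℝ) :
    |Φ (s * z + c) * deriv Φ (s * z + c)| ≤
      deriv Φ 0 ^ 2 * (|s| + |c|) * (1 + z ^ 2) := by
  have h := bnd_basic hC2 hmono hodd hconc s c z
  have hd := bnd_deriv hC2 hmono hodd hconc (s * z + c)
  have hK0 : 0 ≤ deriv Φ 0 := phi_deriv_nonneg hC2 hmono 0
  rw [abs_mul]
  have h1 : |Φ (s * z + c)| * |deriv Φ (s * z + c)| ≤
      (deriv Φ 0 * (|s| * |z| + |c|)) * deriv Φ 0 :=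
    mul_le_mul h hd (abs_nonneg _) (by positivity)
  refine h1.trans ?_
  have := alg4 (deriv Φ 0) |s| |c| |z| (abs_nonneg c) (abs_nonneg z) (abs_nonneg s) (abs_z_le z)
  rwa [sq_abs] at this

end Bounds

lemma gauss_core (hC2 : ContDiff ℝ 2 Φ) (hmono : StrictMono Φ) (hodd : ∀ x, Φ (-x) = -Φ x)
    (hconc : ∀ x ≠ 0, x * deriv (deriv Φ) x < 0) (b : ℝ) :
    AntitoneOn (fun s => (∫ z, Φ (s * z + b) ^ 2 ∂(gaussianReal 0 1)) / s ^ 2) (Ioi 0) := by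
  have hΦc : Continuous Φ := hC2.continuous
  have hΦ'c : Continuous (deriv Φ) := (phi_deriv_diff hC2).continuous
  have hK0 : 0 ≤ deriv Φ 0 := phi_deriv_nonneg hC2 hmono 0
  have hlinc : ∀ s : ℝ, Continuous fun z : ℝ => s * z + b :=
    fun s => (continuous_const.mul continuous_id).add continuous_const
  have hGc : ∀ s : ℝ, Continuous fun z => Φ (s * z + b) ^ 2 :=
    fun s => (hΦc.comp (hlinc s)).pow 2
  have intG : ∀ s : ℝ, Integrable (fun z => Φ (s * z + b) ^ 2) (gaussianReal 0 1) :=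
    fun s => gaussian_integrable_of_le _ (hGc s).aestronglyMeasurable
      (fun z => bnd1 hC2 hmono hodd hconc s b z)
  have intF' : ∀ s : ℝ, Integrable
      (fun z => z * (2 * Φ (s * z + b) * deriv Φ (s * z + b))) (gaussianReal 0 1) :=
    fun s => gaussian_integrable_of_le _
      (continuous_id.mul ((continuous_const.mul (hΦc.comp (hlinc s))).mul
        (hΦ'c.comp (hlinc s)))).aestronglyMeasurable
      (fun z => bnd2 hC2 hmono hodd hconc s b z)
  have intX : ∀ s : ℝ, Integrable
      (fun z => (s * z + b) * (2 * Φ (s * z + b) * deriv Φ (s * z + b))) (gaussianReal 0 1) :=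
    fun s => gaussian_integrable_of_le _
      ((hlinc s).mul ((continuous_const.mul (hΦc.comp (hlinc s))).mul
        (hΦ'c.comp (hlinc s)))).aestronglyMeasurable
      (fun z => bnd3 hC2 hmono hodd hconc s b z)
  have intq : ∀ s c : ℝ, Integrable
      (fun z => Φ (s * z + c) * deriv Φ (s * z + c)) (gaussianReal 0 1) := by
    intro s c
    have hl : Continuous fun z : ℝ => s * z + c :=
      (continuous_const.mul continuous_id).add continuous_const
    exact gaussian_integrable_of_le _
      ((hΦc.comp hl).mul (hΦ'c.comp hl)).aestronglyMeasurable
      (fun z => bnd4 hC2 hmono hodd hconc s c z)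
  -- derivative of the smoothed functional
  have hM : ∀ s : ℝ, HasDerivAt (fun t => ∫ z, Φ (t * z + b) ^ 2 ∂(gaussianReal 0 1))
      (∫ z, z * (2 * Φ (s * z + b) * deriv Φ (s * z + b)) ∂(gaussianReal 0 1)) s := by
    intro s
    have hd := hasDerivAt_integral_of_dominated_loc_of_deriv_le
      (F := fun t z => Φ (t * z + b) ^ 2)
      (F' := fun t z => z * (2 * Φ (t * z + b) * deriv Φ (t * z + b)))
      (bound := fun z => (2 * deriv Φ 0 ^ 2 * ((|s| + 1) + |b|)) * (1 + z ^ 2))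
      (μ := gaussianReal 0 1) (x₀ := s) (Metric.ball_mem_nhds s one_pos)
      (Filter.Eventually.of_forall fun t => (hGc t).aestronglyMeasurable)
      (intG s)
      ((continuous_id.mul ((continuous_const.mul (hΦc.comp (hlinc s))).mul
        (hΦ'c.comp (hlinc s)))).aestronglyMeasurable)
      ?_ (gaussian_integrable_quadratic.const_mul _) ?_
    · exact hd.2
    · refine Filter.Eventually.of_forall fun z => fun t ht => ?_
      have hb2 := bnd2 hC2 hmono hodd hconc t b z
      rw [Real.norm_eq_abs]
      refine hb2.trans ?_
      have htle : |t| ≤ |s| + 1 := by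
        have := Metric.mem_ball.1 ht
        rw [Real.dist_eq] at this
        calc |t| = |(t - s) + s| := by ring_nf
          _ ≤ |t - s| + |s| := abs_add_le _ _
          _ ≤ |s| + 1 := by linarith
      have hmul : 2 * deriv Φ 0 ^ 2 * (|t| + |b|) ≤ 2 * deriv Φ 0 ^ 2 * ((|s| + 1) + |b|) := by
        apply mul_le_mul_of_nonneg_left _ (by positivity)
        linarith
      exact mul_le_mul_of_nonneg_right hmul (by positivity)
    · refine Filter.Eventually.of_forall fun z => fun t _ => ?_
      have h0 : HasDerivAt (fun t : ℝ => t * z + b) z t := by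
        simpa using (hasDerivAt_mul_const z (x := t)).add_const b
      have h1 : HasDerivAt (fun t => Φ (t * z + b)) (deriv Φ (t * z + b) * z) t :=
        ((phi_diff hC2 (t * z + b)).hasDerivAt).comp t h0
      have h2 := h1.pow 2
      convert h2 using 1
      · rfl
      · rfl
      · ring
  -- core inequality : s D(s) ≤ 2 M(s)
  have key : ∀ s : ℝ, 0 < s →
      s * (∫ z, z * (2 * Φ (s * z + b) * deriv Φ (s * z + b)) ∂(gaussianReal 0 1)) ≤
      2 * ∫ z, Φ (s * z + b) ^ 2 ∂(gaussianReal 0 1) := by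
    intro s hs
    set v : ℝ≥0 := ⟨s ^ 2, sq_nonneg s⟩ with hvdef
    have hv : v ≠ 0 := by
      intro h
      have h2 : ((v : ℝ≥0) : ℝ) = 0 := by rw [h]; simp
      rw [hvdef] at h2
      change s ^ 2 = 0 at h2
      nlinarith
    have hsv : √(v : ℝ) = s := by
      rw [hvdef]
      change √(s ^ 2) = s
      exact Real.sqrt_sq hs.le
    have hqc : Continuous fun u => Φ u * deriv Φ u := hΦc.mul hΦ'c
    have hqodd : ∀ u : ℝ, Φ (-u) * deriv Φ (-u) = -(Φ u * deriv Φ u) := by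
      intro u; rw [hodd, phi_deriv_even hC2 hodd]; ring
    have hqpos : ∀ u : ℝ, 0 ≤ u → 0 ≤ Φ u * deriv Φ u :=
      fun u hu => mul_nonneg (phi_nonneg hmono hodd hu) (phi_deriv_nonneg hC2 hmono u)
    have hqint : ∀ c : ℝ, Integrable (fun u => Φ u * deriv Φ u) (gaussianReal c v) := by
      intro c
      rw [gaussian_integrable_comp c v hqc]
      exact intq (√(v : ℝ)) c
    have hrefl : 0 ≤ b * ∫ u, Φ u * deriv Φ u ∂(gaussianReal b v) :=
      gaussian_refl_mul_nonneg _ hqc hqodd hqpos b hv hqint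
    have htrans : ∫ u, Φ u * deriv Φ u ∂(gaussianReal b v) =
        ∫ z, Φ (s * z + b) * deriv Φ (s * z + b) ∂(gaussianReal 0 1) := by
      rw [gaussian_integral_comp b v hqc, hsv]
    rw [htrans] at hrefl
    have hsplit : (fun z => s * (z * (2 * Φ (s * z + b) * deriv Φ (s * z + b)))) =
        fun z => (s * z + b) * (2 * Φ (s * z + b) * deriv Φ (s * z + b)) -
          (2 * b) * (Φ (s * z + b) * deriv Φ (s * z + b)) := by
      funext z; ring
    rw [← integral_const_mul _ _, hsplit,
      integral_sub (intX s) ((intq s b).const_mul (2 * b)), integral_const_mul _ _]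
    have le1 : ∫ z, (s * z + b) * (2 * Φ (s * z + b) * deriv Φ (s * z + b))
          ∂(gaussianReal 0 1) ≤ ∫ z, 2 * Φ (s * z + b) ^ 2 ∂(gaussianReal 0 1) := by
      apply integral_mono (intX s) ((intG s).const_mul 2)
      intro z
      have := phi_key hC2 hmono hodd hconc (s * z + b)
      simp only
      nlinarith
    rw [integral_const_mul _ _] at le1
    linarith
  -- conclude by the derivative test
  have hdiff : DifferentiableOn ℝ
      (fun s => (∫ z, Φ (s * z + b) ^ 2 ∂(gaussianReal 0 1)) / s ^ 2) (Ioi 0) := by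
    intro s hs
    exact ((hM s).differentiableAt.div (differentiableAt_pow 2)
      (pow_ne_zero 2 (ne_of_gt hs))).differentiableWithinAt
  apply antitoneOn_of_deriv_nonpos (convex_Ioi 0) hdiff.continuousOn
  · rw [interior_Ioi]; exact hdiff
  · rw [interior_Ioi]
    intro s hs
    have hd := (hM s).div (hasDerivAt_pow 2 s) (pow_ne_zero 2 (ne_of_gt hs))
    have hd' : deriv (fun s => (∫ z, Φ (s * z + b) ^ 2 ∂(gaussianReal 0 1)) / s ^ 2) s = _ := hd.deriv
    rw [hd']
    rw [div_nonpos_iff]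
    right
    refine ⟨?_, by positivity⟩
    have hkey := key s hs
    have hs' : (0:ℝ) < s := hs
    have hmul := mul_le_mul_of_nonneg_left hkey (le_of_lt hs')
    push_cast
    norm_num
    nlinarith [hmul]

end Core

/-- if `f, g` are differentiable, positive and increasing on
`(0,∞)` with `f/g` non-increasing, then `x ↦ E_{b,f(x)}[Φ²]/g(x)` is
non-increasing. -/
theorem guerra_latala_antitone
    (Φ : ℝ → ℝ) (hC2 : ContDiff ℝ 2 Φ) (hmono : StrictMono Φ)
    (hodd : ∀ x, Φ (-x) = -Φ x)
    (hconc : ∀ x ≠ 0, x * deriv (deriv Φ) x < 0)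
    (hint : Integrable (fun x => |Φ x|) (gaussianReal 0 1))
    (b : ℝ) (f g : ℝ → ℝ)
    (hfpos : ∀ x ∈ Ioi (0:ℝ), 0 < f x) (hgpos : ∀ x ∈ Ioi (0:ℝ), 0 < g x)
    (hfdiff : ∀ x ∈ Ioi (0:ℝ), DifferentiableAt ℝ f x)
    (hgdiff : ∀ x ∈ Ioi (0:ℝ), DifferentiableAt ℝ g x)
    (hfmono : MonotoneOn f (Ioi 0)) (hgmono : MonotoneOn g (Ioi 0))
    (hratio : AntitoneOn (fun x => f x / g x) (Ioi 0)) :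
    AntitoneOn (fun x => gE b (f x) (fun u => Φ u ^ 2) / g x) (Ioi 0) := by
  intro x hx y hy hxy
  simp only
  have hfx := hfpos x hx
  have hfy := hfpos y hy
  have hgx := hgpos x hx
  have hgy := hgpos y hy
  have hf_le : f x ≤ f y := hfmono hx hy hxy
  have hr : f y / g y ≤ f x / g x := hratio hx hy hxy
  have hΦc : Continuous fun u : ℝ => Φ u ^ 2 := hC2.continuous.pow 2
  have hgEx : gE b (f x) (fun u => Φ u ^ 2) =
      ∫ z, Φ (√(f x) * z + b) ^ 2 ∂(gaussianReal 0 1) := by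
    simp only [gE]
    rw [gaussian_integral_comp b _ hΦc, Real.coe_toNNReal _ hfx.le]
  have hgEy : gE b (f y) (fun u => Φ u ^ 2) =
      ∫ z, Φ (√(f y) * z + b) ^ 2 ∂(gaussianReal 0 1) := by
    simp only [gE]
    rw [gaussian_integral_comp b _ hΦc, Real.coe_toNNReal _ hfy.le]
  have hcore := gauss_core hC2 hmono hodd hconc b
  have hs1 : √(f x) ∈ Ioi (0:ℝ) := Real.sqrt_pos.2 hfx
  have hs2 : √(f y) ∈ Ioi (0:ℝ) := Real.sqrt_pos.2 hfy
  have hmono2 := hcore hs1 hs2 (Real.sqrt_le_sqrt hf_le)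
  simp only at hmono2
  rw [Real.sq_sqrt hfx.le, Real.sq_sqrt hfy.le] at hmono2
  rw [hgEx, hgEy]
  set A := ∫ z, Φ (√(f x) * z + b) ^ 2 ∂(gaussianReal 0 1) with hA0
  set B := ∫ z, Φ (√(f y) * z + b) ^ 2 ∂(gaussianReal 0 1) with hB0
  have hA : 0 ≤ A := integral_nonneg fun z => sq_nonneg _
  have hB : 0 ≤ B := integral_nonneg fun z => sq_nonneg _
  rw [div_le_div_iff₀ hgy hgx]
  have h1 : B * f x ≤ A * f y := (div_le_div_iff₀ hfy hfx).1 hmono2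
  have h2 : f y * g x ≤ f x * g y := (div_le_div_iff₀ hgy hgx).1 hr
  nlinarith [mul_le_mul_of_nonneg_right h1 hgx.le, mul_le_mul_of_nonneg_left h2 hA,
    mul_nonneg hA hgy.le, hfx]
end

section
/- Fix β > 0, b₂ ∈ ℝ, α₂, α₃ ∈ (0,1), and let Q₁(p₁) be the convex increasing function defined implicitly by p₁ = α₁ E_{b₁}[tanh²(βη√Q₁)]. Then z(p₁) := α₂ E_{b₂,1}[tanh²(βη√(p₁ + α₃))] / Q₁(p₁) is strictly decreasing in p₁ on its domain. -/
open MeasureTheory ProbabilityTheory Real Set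
open scoped ENNReal NNReal

/-- `E_{0,1}[tanh²(b + βη√σ)]`. -/
noncomputable def tanhSq (b β Q : ℝ) : ℝ :=
  ∫ η, Real.tanh (b + β * η * Real.sqrt Q) ^ 2 ∂(gaussianReal 0 1)


lemma tanh_eq (y : ℝ) : Real.tanh y = Real.sinh y / Real.cosh y := Real.tanh_eq_sinh_div_cosh y

lemma hasDerivAt_tanh (y : ℝ) : HasDerivAt Real.tanh (1 - Real.tanh y ^ 2) y := by
  have h : HasDerivAt (fun x => Real.sinh x / Real.cosh x)
      ((Real.cosh y * Real.cosh y - Real.sinh y * Real.sinh y) / Real.cosh y ^ 2) y :=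
    (Real.hasDerivAt_sinh y).div (Real.hasDerivAt_cosh y) (Real.cosh_pos y).ne'
  have : (Real.cosh y * Real.cosh y - Real.sinh y * Real.sinh y) / Real.cosh y ^ 2
      = 1 - Real.tanh y ^ 2 := by
    rw [Real.tanh_eq_sinh_div_cosh, div_pow, eq_sub_iff_add_eq, ← add_div,
      div_eq_one_iff_eq (by positivity)]
    nlinarith [Real.cosh_sq y]
  rw [← this]
  exact h.congr_of_eventuallyEq (Filter.Eventually.of_forall fun x => Real.tanh_eq_sinh_div_cosh x)

lemma continuous_tanh : Continuous Real.tanh := by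
  have : Real.tanh = fun y => Real.sinh y / Real.cosh y := funext Real.tanh_eq_sinh_div_cosh
  rw [this]
  exact Real.continuous_sinh.div Real.continuous_cosh fun y => (Real.cosh_pos y).ne'

lemma tanh_sq_lt_one (y : ℝ) : Real.tanh y ^ 2 < 1 := by
  rw [Real.tanh_eq_sinh_div_cosh, div_pow, div_lt_one (by positivity)]
  nlinarith [Real.cosh_sq y, Real.cosh_pos y]

lemma abs_tanh_le_one (y : ℝ) : |Real.tanh y| ≤ 1 := by
  nlinarith [_root_.tanh_sq_lt_one y, sq_abs (Real.tanh y), abs_nonneg (Real.tanh y)]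

lemma tanh_nonneg {y : ℝ} (hy : 0 ≤ y) : 0 ≤ Real.tanh y := by
  rw [Real.tanh_eq_sinh_div_cosh]
  exact div_nonneg (Real.sinh_nonneg_iff.2 hy) (Real.cosh_pos y).le

-- key pointwise inequality
lemma key_pointwise (y : ℝ) : y * (Real.tanh y * (1 - Real.tanh y ^ 2)) ≤ Real.tanh y ^ 2 := by
  have main : ∀ z : ℝ, 0 ≤ z → z * (Real.tanh z * (1 - Real.tanh z ^ 2)) ≤ Real.tanh z ^ 2 := by
    intro z hz
    have h1 : z * (1 - Real.tanh z ^ 2) ≤ Real.tanh z := by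
      have hc := Real.cosh_pos z
      have hs : z ≤ Real.sinh z * Real.cosh z := by
        have := Real.self_le_sinh_iff.2 (by linarith : (0:ℝ) ≤ 2 * z)
        rw [Real.sinh_two_mul] at this
        linarith
      have hsn : 0 ≤ Real.sinh z := Real.sinh_nonneg_iff.2 hz
      rw [Real.tanh_eq_sinh_div_cosh, div_pow, le_div_iff₀ (by positivity)]
      have hcs := Real.cosh_sq z
      have e : 1 - Real.sinh z ^ 2 / Real.cosh z ^ 2 = 1 / Real.cosh z ^ 2 := by
        field_simp
        linarith
      rw [e]
      have : z * (1 / Real.cosh z ^ 2) * Real.cosh z = z / Real.cosh z := by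
        field_simp
      rw [this, div_le_iff₀ hc]
      linarith
    nlinarith [tanh_nonneg hz, _root_.tanh_sq_lt_one z]
  rcases le_or_gt 0 y with hy | hy
  · exact main y hy
  · have := main (-y) (by linarith)
    rw [Real.tanh_neg] at this
    nlinarith [this]


lemma pdf_eq (x : ℝ) :
    gaussianPDFReal 0 1 x = (Real.sqrt (2 * π))⁻¹ * Real.exp (-(x ^ 2 / 2)) := by
  rw [gaussianPDFReal]
  norm_num
  exact Or.inl (by ring)

lemma continuous_pdf : Continuous (gaussianPDFReal 0 1) := by
  have : gaussianPDFReal 0 1 = fun x => (Real.sqrt (2 * π))⁻¹ * Real.exp (-(x ^ 2 / 2)) :=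
    funext pdf_eq
  rw [this]
  continuity

lemma integral_gaussian_eq (g : ℝ → ℝ) :
    ∫ x, g x ∂(gaussianReal 0 1) = ∫ x, gaussianPDFReal 0 1 x * g x := by
  rw [gaussianReal_of_var_ne_zero 0 one_ne_zero]
  have h : gaussianPDF 0 1 = fun x => ((Real.toNNReal (gaussianPDFReal 0 1 x) : ℝ≥0) : ℝ≥0∞) := by
    funext x; rfl
  rw [h, integral_withDensity_eq_integral_smul
    ((measurable_gaussianPDFReal 0 1).real_toNNReal) g]
  congr 1
  funext x
  rw [NNReal.smul_def, smul_eq_mul, Real.coe_toNNReal _ (gaussianPDFReal_nonneg 0 1 x)]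

lemma integrable_gaussian_iff {g : ℝ → ℝ} :
    Integrable g (gaussianReal 0 1) ↔
      Integrable (fun x => g x * gaussianPDFReal 0 1 x) volume := by
  rw [gaussianReal_of_var_ne_zero 0 one_ne_zero, gaussianPDF_def,
    integrable_withDensity_iff (measurable_gaussianPDFReal 0 1).ennreal_ofReal
      (Filter.Eventually.of_forall fun x => ENNReal.ofReal_lt_top)]
  have e : (fun x => g x * (ENNReal.ofReal (gaussianPDFReal 0 1 x)).toReal)
      = fun x => g x * gaussianPDFReal 0 1 x :=
    funext fun x => by rw [ENNReal.toReal_ofReal (gaussianPDFReal_nonneg 0 1 x)]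
  rw [e]

lemma integrable_of_bdd {g : ℝ → ℝ} (hg : Continuous g) (C : ℝ) (hC : ∀ x, |g x| ≤ C) :
    Integrable g (gaussianReal 0 1) :=
  Integrable.mono' (integrable_const C) hg.aestronglyMeasurable
    (Filter.Eventually.of_forall fun x => by simpa using hC x)

lemma integrable_abs_gaussian (c : ℝ) :
    Integrable (fun a => c * |a|) (gaussianReal 0 1) := by
  apply Integrable.const_mul
  rw [integrable_gaussian_iff]
  have h : Integrable (fun x : ℝ => (Real.sqrt (2 * π))⁻¹ * |x * Real.exp (-(1/2) * x ^ 2)|) :=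
    ((integrable_mul_exp_neg_mul_sq (by norm_num : (0:ℝ) < 1/2)).abs).const_mul _
  apply h.mono' (continuous_abs.mul continuous_pdf).aestronglyMeasurable
  refine Filter.Eventually.of_forall fun x => ?_
  rw [Real.norm_eq_abs, Pi.mul_apply, pdf_eq, abs_mul, abs_abs, abs_of_nonneg (by positivity : (0:ℝ) ≤ (Real.sqrt (2*π))⁻¹ * Real.exp (-(x^2/2))), abs_mul, abs_of_nonneg (Real.exp_nonneg _)]
  have : -(1/2) * x ^ 2 = -(x ^ 2 / 2) := by ring
  rw [this]
  ring_nf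
  exact le_refl _

noncomputable def psi (y : ℝ) : ℝ := Real.tanh y * (1 - Real.tanh y ^ 2)

lemma continuous_psi : Continuous psi := by
  unfold psi
  exact continuous_tanh.mul ((continuous_const.sub ((continuous_tanh.pow 2))))

lemma abs_psi_le_one (y : ℝ) : |psi y| ≤ 1 := by
  unfold psi
  rw [abs_mul]
  have h1 := abs_tanh_le_one y
  have h2 : |1 - Real.tanh y ^ 2| ≤ 1 := by
    rw [abs_of_nonneg (by nlinarith [_root_.tanh_sq_lt_one y])]
    nlinarith [sq_nonneg (Real.tanh y)]
  nlinarith [abs_nonneg (Real.tanh y), abs_nonneg (1 - Real.tanh y ^ 2)]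

lemma psi_neg (y : ℝ) : psi (-y) = -psi y := by
  unfold psi; rw [Real.tanh_neg]; ring

lemma psi_nonneg {y : ℝ} (hy : 0 ≤ y) : 0 ≤ psi y :=
  mul_nonneg (tanh_nonneg hy) (by nlinarith [_root_.tanh_sq_lt_one y])

lemma psi_nonpos {y : ℝ} (hy : y ≤ 0) : psi y ≤ 0 := by
  have := psi_nonneg (by linarith : (0:ℝ) ≤ -y)
  rw [psi_neg] at this; linarith

lemma pdf_even (z : ℝ) : gaussianPDFReal 0 1 (-z) = gaussianPDFReal 0 1 z := by
  rw [pdf_eq, pdf_eq, neg_pow]; norm_num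

lemma pdf_mono {z w : ℝ} (h : z ^ 2 ≤ w ^ 2) :
    gaussianPDFReal 0 1 w ≤ gaussianPDFReal 0 1 z := by
  rw [pdf_eq, pdf_eq]
  have : Real.exp (-(w ^ 2 / 2)) ≤ Real.exp (-(z ^ 2 / 2)) := Real.exp_le_exp.2 (by linarith)
  have hp : (0:ℝ) < (Real.sqrt (2 * π))⁻¹ := by
    rw [inv_pos]; exact Real.sqrt_pos.2 (by positivity)
  nlinarith

lemma integrable_psi_aff_pdf (b x c : ℝ) :
    Integrable (fun η => gaussianPDFReal 0 1 (η + c) * psi (b + x * η)) volume := by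
  apply Integrable.mono' ((integrable_gaussianPDFReal 0 1).comp_add_right c)
    (((continuous_pdf.comp (continuous_id.add continuous_const)).mul
      (continuous_psi.comp (by fun_prop))).aestronglyMeasurable)
  refine Filter.Eventually.of_forall fun η => ?_
  simp only [Function.comp, id, Pi.mul_apply, Pi.add_apply]
  rw [Real.norm_eq_abs, abs_mul, abs_of_nonneg (gaussianPDFReal_nonneg 0 1 _)]
  calc gaussianPDFReal 0 1 (η + c) * |psi (b + x * η)|
      ≤ gaussianPDFReal 0 1 (η + c) * 1 :=
        mul_le_mul_of_nonneg_left (abs_psi_le_one _) (gaussianPDFReal_nonneg 0 1 _)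
    _ = gaussianPDFReal 0 1 (η + c) := mul_one _

lemma sign_core {b x : ℝ} (hb : 0 ≤ b) (hx : 0 < x) :
    0 ≤ ∫ η, psi (b + x * η) ∂(gaussianReal 0 1) := by
  rw [integral_gaussian_eq]
  set c : ℝ := 2 * b / x with hc
  set A : ℝ → ℝ := fun η => gaussianPDFReal 0 1 η * psi (b + x * η) with hA
  have hAint : Integrable A volume := by
    have := integrable_psi_aff_pdf b x 0
    simpa using this
  have hA2int : Integrable (fun η => gaussianPDFReal 0 1 (η + c) * psi (b + x * η)) volume :=
    integrable_psi_aff_pdf b x c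
  have hrefl : ∫ η, A η = ∫ η, A (-(η + c)) := by
    rw [MeasureTheory.integral_add_right_eq_self (fun η => A (-η)) c]
    rw [MeasureTheory.integral_neg_eq_self]
  have hAval : ∀ η, A (-(η + c)) = -(gaussianPDFReal 0 1 (η + c) * psi (b + x * η)) := by
    intro η
    have h1 : b + x * (-(η + c)) = -(b + x * η) := by
      rw [hc]; field_simp; ring
    rw [hA]
    simp only
    rw [h1, psi_neg, pdf_even]
    ring
  have hIJ : ∫ η, A η = -∫ η, gaussianPDFReal 0 1 (η + c) * psi (b + x * η) := by
    rw [hrefl]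
    rw [show (fun η => A (-(η + c))) = fun η => -(gaussianPDFReal 0 1 (η + c) * psi (b + x * η))
      from funext hAval]
    exact integral_neg _
  have hK : 0 ≤ ∫ η, (A η - gaussianPDFReal 0 1 (η + c) * psi (b + x * η)) := by
    apply integral_nonneg
    intro η
    rw [hA]
    simp only [Pi.zero_apply]
    rcases le_or_gt 0 (b + x * η) with h | h
    · have hψ : 0 ≤ psi (b + x * η) := psi_nonneg h
      have hpdf : gaussianPDFReal 0 1 (η + c) ≤ gaussianPDFReal 0 1 η := by
        apply pdf_mono
        have hid : (η + c) ^ 2 - η ^ 2 = (4 * b / x ^ 2) * (x * η + b) := by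
          rw [hc]; field_simp; ring
        have h4 : (0:ℝ) ≤ (4 * b / x ^ 2) * (x * η + b) :=
          mul_nonneg (by positivity) (by linarith)
        linarith
      nlinarith [mul_le_mul_of_nonneg_right hpdf hψ]
    · have hψ : psi (b + x * η) ≤ 0 := psi_nonpos h.le
      have hpdf : gaussianPDFReal 0 1 η ≤ gaussianPDFReal 0 1 (η + c) := by
        apply pdf_mono
        have hid : η ^ 2 - (η + c) ^ 2 = -((4 * b / x ^ 2) * (x * η + b)) := by
          rw [hc]; field_simp; ring
        have h4 : (4 * b / x ^ 2) * (x * η + b) ≤ 0 :=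
          mul_nonpos_of_nonneg_of_nonpos (by positivity) (by linarith)
        linarith
      nlinarith [mul_le_mul_of_nonpos_right hpdf hψ]
  have hsub : ∫ η, (A η - gaussianPDFReal 0 1 (η + c) * psi (b + x * η))
      = (∫ η, A η) - ∫ η, gaussianPDFReal 0 1 (η + c) * psi (b + x * η) :=
    integral_sub hAint hA2int
  rw [hsub] at hK
  linarith [hK, hIJ, le_of_sub_nonneg hK]

lemma sign_lemma (b : ℝ) {x : ℝ} (hx : 0 < x) :
    0 ≤ b * ∫ η, psi (b + x * η) ∂(gaussianReal 0 1) := by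
  rcases le_or_gt 0 b with hb | hb
  · exact mul_nonneg hb (sign_core hb hx)
  · have hcore := sign_core (by linarith : (0:ℝ) ≤ -b) hx
    have hflip : ∫ η, psi (b + x * η) ∂(gaussianReal 0 1)
        = -∫ η, psi (-b + x * η) ∂(gaussianReal 0 1) := by
      rw [integral_gaussian_eq, integral_gaussian_eq]
      rw [← MeasureTheory.integral_neg_eq_self
        (fun η => gaussianPDFReal 0 1 η * psi (-b + x * η)) volume]
      rw [← integral_neg]
      congr 1
      funext η
      rw [pdf_even]
      have : -b + x * -η = -(b + x * η) := by ring
      rw [this, psi_neg]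
      ring
    rw [hflip]
    have : 0 ≤ ∫ η, psi (-b + x * η) ∂(gaussianReal 0 1) := hcore
    nlinarith

lemma abs_mul_psi_le_one (y : ℝ) : |y * psi y| ≤ 1 := by
  have h1 : 0 ≤ y * psi y := by
    unfold psi
    rcases le_or_gt 0 y with h | h
    · exact mul_nonneg h (psi_nonneg h)
    · have h2 := psi_nonpos h.le
      unfold psi at h2
      nlinarith
  rw [abs_of_nonneg h1]
  have := key_pointwise y
  have := _root_.tanh_sq_lt_one y
  unfold psi
  nlinarith

lemma hasDerivAt_tanhSq (b β : ℝ) (hβ : 0 < β) {σ₀ : ℝ} (hσ₀ : 0 < σ₀) :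
    HasDerivAt (tanhSq b β)
      (∫ η, psi (b + β * η * Real.sqrt σ₀) * (β * η / Real.sqrt σ₀) ∂(gaussianReal 0 1)) σ₀ := by
  have key := hasDerivAt_integral_of_dominated_loc_of_deriv_le
    (μ := gaussianReal 0 1) (x₀ := σ₀) (s := Metric.ball σ₀ (σ₀/2)) (Metric.ball_mem_nhds _ (by positivity))
    (F := fun σ η => Real.tanh (b + β * η * Real.sqrt σ) ^ 2)
    (F' := fun σ η => psi (b + β * η * Real.sqrt σ) * (β * η / Real.sqrt σ))
    (bound := fun a => (β / Real.sqrt (σ₀/2)) * |a|)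
    ?meas ?int ?meas' ?bd ?bdint ?diff
  · exact key.2
  · exact Filter.Eventually.of_forall fun σ =>
      (((continuous_tanh.comp (by fun_prop)).pow 2).aestronglyMeasurable)
  · exact integrable_of_bdd ((continuous_tanh.comp (by fun_prop)).pow 2) 1
      fun x => by
        rw [abs_of_nonneg (sq_nonneg _)]
        exact (_root_.tanh_sq_lt_one _).le
  · exact ((continuous_psi.comp (by fun_prop)).mul (by fun_prop)).aestronglyMeasurable
  · refine Filter.Eventually.of_forall fun a σ hσ => ?_
    have hσ' : σ₀/2 < σ := by
      have := abs_lt.1 (by simpa [Real.dist_eq] using Metric.mem_ball.1 hσ)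
      linarith [this.1]
    have hσpos : 0 < σ := by linarith
    have hsq : Real.sqrt (σ₀/2) ≤ Real.sqrt σ := Real.sqrt_le_sqrt (by linarith)
    have hsqpos : 0 < Real.sqrt (σ₀/2) := Real.sqrt_pos.2 (by positivity)
    rw [Real.norm_eq_abs, abs_mul]
    calc |psi (b + β * a * Real.sqrt σ)| * |β * a / Real.sqrt σ|
        ≤ 1 * |β * a / Real.sqrt σ| :=
          mul_le_mul_of_nonneg_right (abs_psi_le_one _) (abs_nonneg _)
      _ = β * |a| / Real.sqrt σ := by
          rw [one_mul, abs_div, abs_mul, abs_of_pos hβ,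
            abs_of_pos (Real.sqrt_pos.2 hσpos)]
      _ ≤ β * |a| / Real.sqrt (σ₀/2) := by
          apply div_le_div_of_nonneg_left (by positivity) hsqpos hsq
      _ = β / Real.sqrt (σ₀/2) * |a| := by ring
  · exact integrable_abs_gaussian _
  · refine Filter.Eventually.of_forall fun a σ hσ => ?_
    have hσ' : σ₀/2 < σ := by
      have := abs_lt.1 (by simpa [Real.dist_eq] using Metric.mem_ball.1 hσ)
      linarith [this.1]
    have hσpos : 0 < σ := by linarith
    have hsqpos : 0 < Real.sqrt σ := Real.sqrt_pos.2 hσpos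
    have hsqrt : HasDerivAt Real.sqrt (1 / (2 * Real.sqrt σ)) σ :=
      Real.hasDerivAt_sqrt hσpos.ne'
    have hinner : HasDerivAt (fun σ => b + β * a * Real.sqrt σ)
        (β * a * (1 / (2 * Real.sqrt σ))) σ := by
      exact ((hsqrt.const_mul (β * a)).const_add b)
    have htanh := (hasDerivAt_tanh (b + β * a * Real.sqrt σ)).comp σ hinner
    have hpow := htanh.pow 2
    have heq : (2 : ℕ) * Real.tanh (b + β * a * Real.sqrt σ) ^ (2 - 1) *
          ((1 - Real.tanh (b + β * a * Real.sqrt σ) ^ 2) * (β * a * (1 / (2 * Real.sqrt σ))))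
        = psi (b + β * a * Real.sqrt σ) * (β * a / Real.sqrt σ) := by
      unfold psi
      field_simp
      ring
    simp only [Function.comp] at hpow
    rw [heq] at hpow
    exact hpow

lemma sigma_deriv_le (b β : ℝ) (hβ : 0 < β) {σ : ℝ} (hσ : 0 < σ) :
    σ * ∫ η, psi (b + β * η * Real.sqrt σ) * (β * η / Real.sqrt σ) ∂(gaussianReal 0 1)
      ≤ tanhSq b β σ := by
  have hsq : 0 < Real.sqrt σ := Real.sqrt_pos.2 hσ
  have hmulself : Real.sqrt σ * Real.sqrt σ = σ := Real.mul_self_sqrt hσ.le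
  set γ := gaussianReal 0 1
  set Y : ℝ → ℝ := fun η => b + β * η * Real.sqrt σ with hY
  have hYcont : Continuous Y := by fun_prop
  have hint1 : Integrable (fun η => Y η * psi (Y η)) γ :=
    integrable_of_bdd (by exact (hYcont.mul (continuous_psi.comp hYcont))) 1
      (fun η => abs_mul_psi_le_one (Y η))
  have hint2 : Integrable (fun η => b * psi (Y η)) γ := by
    apply integrable_of_bdd (continuous_const.mul (continuous_psi.comp hYcont)) |b|
    intro η
    simp only [Pi.mul_apply, Function.comp_apply, abs_mul]
    calc |b| * |psi (Y η)| ≤ |b| * 1 :=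
      mul_le_mul_of_nonneg_left (abs_psi_le_one _) (abs_nonneg _)
    _ = |b| := mul_one _
  have step1 : σ * ∫ η, psi (Y η) * (β * η / Real.sqrt σ) ∂γ
      = ∫ η, (Y η * psi (Y η) - b * psi (Y η)) ∂γ := by
    rw [← integral_const_mul]
    congr 1
    funext η
    have : σ * (psi (Y η) * (β * η / Real.sqrt σ))
        = psi (Y η) * (β * η * (σ / Real.sqrt σ)) := by ring
    rw [this]
    have h2 : σ / Real.sqrt σ = Real.sqrt σ := by
      rw [eq_comm, eq_div_iff hsq.ne', hmulself]
    rw [h2, hY]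
    simp only
    ring
  rw [step1, integral_sub hint1 hint2]
  have hle1 : ∫ η, Y η * psi (Y η) ∂γ ≤ tanhSq b β σ := by
    apply integral_mono hint1 _ _
    · exact integrable_of_bdd (by exact (continuous_tanh.comp hYcont).pow 2) 1
        fun η => by rw [abs_of_nonneg (sq_nonneg _)]; exact (_root_.tanh_sq_lt_one _).le
    · intro η
      exact key_pointwise (Y η)
  have hle2 : 0 ≤ ∫ η, b * psi (Y η) ∂γ := by
    rw [integral_const_mul]
    have hx : 0 < β * Real.sqrt σ := by positivity
    have := sign_lemma b hx
    have hrw : (fun η => psi (b + β * Real.sqrt σ * η)) = fun η => psi (Y η) := by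
      funext η; rw [hY]; ring_nf
    rw [hrw] at this
    exact this
  linarith

lemma tanhSq_antitoneOn (b β : ℝ) (hβ : 0 < β) :
    AntitoneOn (fun σ => tanhSq b β σ / σ) (Ioi (0:ℝ)) := by
  have hderiv : ∀ σ ∈ Ioi (0:ℝ), HasDerivAt (fun σ => tanhSq b β σ / σ)
      (((∫ η, psi (b + β * η * Real.sqrt σ) * (β * η / Real.sqrt σ) ∂(gaussianReal 0 1)) * σ
        - tanhSq b β σ * 1) / σ ^ 2) σ := by
    intro σ hσ
    exact (hasDerivAt_tanhSq b β hβ hσ).div (hasDerivAt_id σ) (ne_of_gt hσ)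
  apply antitoneOn_of_deriv_nonpos (convex_Ioi 0)
  · exact fun σ hσ => ((hderiv σ hσ).continuousAt).continuousWithinAt
  · intro σ hσ
    rw [interior_Ioi] at hσ
    exact (hderiv σ hσ).differentiableAt.differentiableWithinAt
  · intro σ hσ
    rw [interior_Ioi] at hσ
    rw [(hderiv σ hσ).deriv]
    have hσ' : (0:ℝ) < σ := hσ
    have h1 := sigma_deriv_le b β hβ hσ'
    have h2 : (0:ℝ) < σ ^ 2 := by positivity
    apply div_nonpos_of_nonpos_of_nonneg _ h2.le
    nlinarith [h1]

lemma guerra (b β : ℝ) (hβ : 0 < β) {σ₁ σ₂ : ℝ} (h1 : 0 < σ₁) (h12 : σ₁ ≤ σ₂) :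
    tanhSq b β σ₂ * σ₁ ≤ tanhSq b β σ₁ * σ₂ := by
  have h2 : 0 < σ₂ := lt_of_lt_of_le h1 h12
  have := tanhSq_antitoneOn b β hβ (show σ₁ ∈ Ioi (0:ℝ) from h1)
    (show σ₂ ∈ Ioi (0:ℝ) from h2) h12
  rw [div_le_div_iff₀ h2 h1] at this
  linarith

lemma tanh_eq_zero_iff {y : ℝ} : Real.tanh y = 0 ↔ y = 0 := by
  rw [Real.tanh_eq_sinh_div_cosh, div_eq_zero_iff]
  constructor
  · rintro (h | h)
    · exact Real.sinh_eq_zero.1 h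
    · exact absurd h (Real.cosh_pos y).ne'
  · rintro rfl; exact Or.inl Real.sinh_zero

lemma tanhSq_pos (b β : ℝ) (hβ : 0 < β) {σ : ℝ} (hσ : 0 < σ) : 0 < tanhSq b β σ := by
  have hsq : 0 < Real.sqrt σ := Real.sqrt_pos.2 hσ
  set γ := gaussianReal 0 1
  set f : ℝ → ℝ := fun η => Real.tanh (b + β * η * Real.sqrt σ) ^ 2 with hf
  have hfint : Integrable f γ :=
    integrable_of_bdd ((continuous_tanh.comp (by fun_prop)).pow 2) 1
      fun η => by rw [abs_of_nonneg (sq_nonneg _)]; exact (_root_.tanh_sq_lt_one _).le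
  rw [show tanhSq b β σ = ∫ η, f η ∂γ from rfl]
  rw [integral_pos_iff_support_of_nonneg (fun η => sq_nonneg _) hfint]
  set η₀ : ℝ := -b / (β * Real.sqrt σ) with hη₀
  have hsupp : Function.support f = {η₀}ᶜ := by
    ext η
    simp only [Function.mem_support, mem_compl_iff, mem_singleton_iff, hf]
    rw [ne_eq, pow_eq_zero_iff (two_ne_zero), tanh_eq_zero_iff]
    constructor
    · intro h hcontra
      apply h
      rw [hcontra, hη₀]
      field_simp
      ring
    · intro h hcontra
      apply h
      rw [hη₀]
      field_simp at hcontra ⊢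
      linarith
  rw [hsupp]
  have hsing : γ {η₀} = 0 :=
    gaussianReal_absolutelyContinuous 0 one_ne_zero (measure_singleton η₀)
  rw [measure_compl (measurableSet_singleton η₀) (measure_ne_top γ _), hsing]
  simp

/-- with `Q₁(p₁)` the convex increasing function defined
implicitly by `p₁ = α₁ E_{b₁}[tanh²(βη√Q₁)]`, the function
`z(p₁) = α₂ E_{b₂}[tanh²(βη√(p₁+α₃))]/Q₁(p₁)` is strictly decreasing. -/
theorem z_strictAnti
    (β b₁ b₂ α₁ α₂ α₃ : ℝ) (hβ : 0 < β)
    (hα₂ : α₂ ∈ Set.Ioo (0:ℝ) 1) (hα₃ : α₃ ∈ Set.Ioo (0:ℝ) 1)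
    (S : Set ℝ) (hS : S ⊆ Ioi 0)
    (Q₁ : ℝ → ℝ)
    (hQpos : ∀ p ∈ S, 0 < Q₁ p)
    (hQdiff : ∀ p ∈ S, DifferentiableAt ℝ Q₁ p)
    (himplicit : ∀ p ∈ S, p = α₁ * tanhSq b₁ β (Q₁ p))
    (hQmono : StrictMonoOn Q₁ S)
    (hQconv : StrictMonoOn (fun p => Q₁ p / p) S) :
    StrictAntiOn (fun p => α₂ * tanhSq b₂ β (p + α₃) / Q₁ p) S := by
  intro p hp q hq hpq
  simp only
  have hp0 : 0 < p := hS hp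
  have hq0 : 0 < q := hS hq
  have hα₃0 : 0 < α₃ := hα₃.1
  have hα₂0 : 0 < α₂ := hα₂.1
  have hpα : 0 < p + α₃ := by linarith
  have hqα : 0 < q + α₃ := by linarith
  have hQp : 0 < Q₁ p := hQpos p hp
  have hQq : 0 < Q₁ q := hQpos q hq
  set Tp := tanhSq b₂ β (p + α₃) with hTp
  set Tq := tanhSq b₂ β (q + α₃) with hTq
  have hTppos : 0 < Tp := tanhSq_pos b₂ β hβ hpα
  have hG : Tq * (p + α₃) ≤ Tp * (q + α₃) := guerra b₂ β hβ hpα (by linarith)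
  have hQ : Q₁ p / p < Q₁ q / q := hQconv hp hq hpq
  have hQ' : Q₁ p * q < Q₁ q * p := by
    rw [div_lt_div_iff₀ hp0 hq0] at hQ
    linarith
  -- goal : α₂ * Tq / Q₁ q < α₂ * Tp / Q₁ p
  rw [div_lt_div_iff₀ hQq hQp]
  have key : Tq * Q₁ p < Tp * Q₁ q := by
    have h1 : Tq * Q₁ p * ((p + α₃) * q) ≤ Tp * (q + α₃) * (Q₁ p * q) := by
      nlinarith [mul_le_mul_of_nonneg_right hG (mul_nonneg hQp.le hq0.le)]
    have h2 : Tp * (q + α₃) * (Q₁ p * q) < Tp * (q + α₃) * (Q₁ q * p) := by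
      apply mul_lt_mul_of_pos_left hQ'
      positivity
    have h3 : Tp * (q + α₃) * (Q₁ q * p) < Tp * Q₁ q * ((p + α₃) * q) := by
      have : (q + α₃) * p < (p + α₃) * q := by nlinarith
      nlinarith [mul_pos hTppos hQq]
    have h4 : Tq * Q₁ p * ((p + α₃) * q) < Tp * Q₁ q * ((p + α₃) * q) := by linarith
    have hpos : 0 < (p + α₃) * q := by positivity
    exact lt_of_mul_lt_mul_right (by linarith) hpos.le
  nlinarith [key]
end
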